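/- arXiv:1503.02203 — 6 statements merged into one kernel-verified Lean document; each statement's English description precedes it below -/
import Mathlib

section
/- Fix d ∈ ℕ (d ≥ 1) and let f_d : ℝ → ℝ be defined by f_d(a) = 1 + |a| for a ≤ 0, f_d(a) = (∑_{i=0}^{d−1} a^i)^{−1} for 0 ≤ a ≤ 1, f_d(a) = 1 + 1/d − a for 1 ≤ a ≤ 1 + 1/d, and f_d(a) = 0 for a ≥ 1 + 1/d. If (a, A) ∈ ℝ² satisfies A > f_d(a), then ℝ^d is not uniformly κΨ_{a,A}-approximable for any κ > 0; that is, for every κ > 0 and every Q₀ ∈ ℕ there exist x ∈ ℝ^d and an integer Q ≥ Q₀ such that for all q ∈ ℕ with 1 ≤ q ≤ Q and all p ∈ ℤ^d one has ‖x − p/q‖_∞ ≥ κ q^{−a} Q^{−A}. -/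
open Finset Filter MeasureTheory

private lemma far_of_unit_frac {M q : ℝ} (hq : 1 ≤ q) (hM : 2 * q ≤ M) (p : ℤ) :
    1 / M ≤ |1 / M - (p : ℝ) / q| := by
  have hq0 : 0 < q := lt_of_lt_of_le one_pos hq
  have hM0 : 0 < M := by nlinarith
  rcases le_or_gt (p : ℝ) 0 with hp | hp
  · have h1 : (p : ℝ) / q ≤ 0 := div_nonpos_of_nonpos_of_nonneg hp hq0.le
    have h2 : 1 / M ≤ 1 / M - (p:ℝ)/q := by linarith
    exact h2.trans (le_abs_self _)
  · have hp1 : (1 : ℝ) ≤ (p : ℝ) := by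
      have h0 : (0:ℤ) < p := by exact_mod_cast hp
      exact_mod_cast h0
    have h3 : 2 / M ≤ 1 / q := by
      rw [div_le_div_iff₀ hM0 hq0]; linarith
    have h4 : 1 / q ≤ (p:ℝ) / q := by gcongr
    have h5 : 1/M + 1/M ≤ 2/M := by rw [← add_div]; norm_num
    have h6 : 1/M ≤ (p:ℝ)/q - 1/M := by linarith
    calc 1/M ≤ (p:ℝ)/q - 1/M := h6
    _ ≤ |1/M - (p:ℝ)/q| := by rw [abs_sub_comm]; exact le_abs_self _

private lemma ev_rpow (e : ℝ) (he : 0 < e) (c : ℝ) :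
    ∀ᶠ Q : ℕ in atTop, c ≤ (Q:ℝ) ^ e :=
  ((tendsto_rpow_atTop he).comp tendsto_natCast_atTop_atTop).eventually_ge_atTop c

private lemma harm_le (Q : ℕ) (hQ : 1 ≤ Q) :
    ∑ q ∈ Finset.Icc 1 Q, (q:ℝ)⁻¹ ≤ 1 + Real.log Q := by
  induction Q, hQ using Nat.le_induction with
  | base => simp
  | succ Q hQ ih =>
    rw [Finset.sum_Icc_succ_top (by omega : 1 ≤ Q + 1)]
    have hQ0 : (0:ℝ) < Q := by exact_mod_cast hQ
    have hQ1 : (0:ℝ) < (Q:ℝ) + 1 := by linarith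
    have hlog : Real.log ((Q:ℝ)/((Q:ℝ)+1)) ≤ (Q:ℝ)/((Q:ℝ)+1) - 1 :=
      Real.log_le_sub_one_of_pos (by positivity)
    have hld : Real.log ((Q:ℝ)/((Q:ℝ)+1)) = Real.log Q - Real.log ((Q:ℝ)+1) :=
      Real.log_div hQ0.ne' hQ1.ne'
    have hfrac : (Q:ℝ)/((Q:ℝ)+1) - 1 = -(((Q:ℝ)+1)⁻¹) := by
      field_simp
      ring
    have key : ((Q:ℝ)+1)⁻¹ ≤ Real.log ((Q:ℝ)+1) - Real.log Q := by
      rw [hld, hfrac] at hlog; linarith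
    have hcast : ((Q+1 : ℕ) : ℝ) = (Q:ℝ) + 1 := by push_cast; ring
    rw [hcast]
    linarith

/-- The critical exponent function `f_d` from the paper. -/
noncomputable def fd (d : ℕ) (a : ℝ) : ℝ :=
  if a ≤ 0 then 1 + |a|
  else if a ≤ 1 then (∑ i ∈ Finset.range d, a ^ i)⁻¹
  else if a ≤ 1 + 1 / d then 1 + 1 / d - a
  else 0

set_option maxHeartbeats 2000000 in
/-- If `A > f_d(a)`, then `ℝ^d` is not uniformly `κΨ_{a,A}`-approximable for any `κ > 0`. -/
theorem not_unif_approx_of_gt_fd (d : ℕ) (hd : 1 ≤ d) (a A : ℝ) (hA : fd d a < A)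
    (κ : ℝ) (hκ : 0 < κ) (Q₀ : ℕ) :
    ∃ x : Fin d → ℝ, ∃ Q : ℕ, Q₀ ≤ Q ∧
      ∀ q : ℕ, 1 ≤ q → q ≤ Q → ∀ p : Fin d → ℤ,
        κ * (q : ℝ) ^ (-a) * (Q : ℝ) ^ (-A) ≤ ‖x - fun i => (p i : ℝ) / q‖ := by
  rcases le_or_gt a 0 with ha | ha
  · -- Case a ≤ 0
    have hfd : fd d a = 1 - a := by rw [fd, if_pos ha, abs_of_nonpos ha]; ring
    have hA1 : 1 - a < A := hfd ▸ hA
    have hev : ∀ᶠ Q : ℕ in atTop, (Q₀ ≤ Q ∧ 1 ≤ Q) ∧ 2*κ ≤ (Q:ℝ) ^ (a + A - 1) :=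
      ((eventually_ge_atTop Q₀).and (eventually_ge_atTop 1)).and
        (ev_rpow _ (by linarith) (2*κ))
    obtain ⟨Q, ⟨⟨hQ₀, hQ1⟩, hQκ⟩⟩ := hev.exists
    have hQ0 : (0:ℝ) < Q := by exact_mod_cast hQ1
    set x : Fin d → ℝ := fun _ => 1 / (2*(Q:ℝ)) with hx
    refine ⟨x, Q, hQ₀, ?_⟩
    intro q hq1 hqQ p
    have hq0 : (0:ℝ) < q := by exact_mod_cast hq1
    have hq1' : (1:ℝ) ≤ (q:ℝ) := by exact_mod_cast hq1
    have hqQ' : (q:ℝ) ≤ Q := by exact_mod_cast hqQ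
    have hpow : (0:ℝ) < (Q:ℝ) ^ (a + A) := Real.rpow_pos_of_pos hQ0 _
    have key : κ * (q:ℝ) ^ (-a) * (Q:ℝ) ^ (-A) ≤ 1 / (2*(Q:ℝ)) := by
      have h1 : (q:ℝ) ^ (-a) ≤ (Q:ℝ) ^ (-a) :=
        Real.rpow_le_rpow hq0.le hqQ' (by linarith)
      have h2 : κ * (q:ℝ) ^ (-a) * (Q:ℝ) ^ (-A) ≤ κ * ((Q:ℝ) ^ (-a) * (Q:ℝ) ^ (-A)) := by
        rw [mul_assoc]
        gcongr
      have h3 : (Q:ℝ) ^ (-a) * (Q:ℝ) ^ (-A) = ((Q:ℝ) ^ (a + A))⁻¹ := by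
        rw [← Real.rpow_add hQ0, ← Real.rpow_neg hQ0.le]; ring_nf
      have h4 : 2*κ*(Q:ℝ) ≤ (Q:ℝ) ^ (a + A) := by
        have he : (Q:ℝ) ^ (a + A - 1) * (Q:ℝ) ^ (1:ℝ) = (Q:ℝ) ^ (a + A) := by
          rw [← Real.rpow_add hQ0]; ring_nf
        calc 2*κ*(Q:ℝ) ≤ (Q:ℝ) ^ (a + A - 1) * (Q:ℝ) := by gcongr
        _ = (Q:ℝ) ^ (a + A) := by rw [← he, Real.rpow_one]
      have h5 : κ * ((Q:ℝ) ^ (a + A))⁻¹ ≤ 1 / (2*(Q:ℝ)) := by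
        rw [← div_eq_mul_inv, div_le_div_iff₀ hpow (by positivity)]
        nlinarith
      calc κ * (q:ℝ) ^ (-a) * (Q:ℝ) ^ (-A) ≤ κ * ((Q:ℝ) ^ (-a) * (Q:ℝ) ^ (-A)) := h2
      _ = κ * ((Q:ℝ) ^ (a + A))⁻¹ := by rw [h3]
      _ ≤ 1 / (2*(Q:ℝ)) := h5
    have hfar := far_of_unit_frac hq1' (by linarith : 2*(q:ℝ) ≤ 2*(Q:ℝ)) (p ⟨0, hd⟩)
    calc κ * (q:ℝ) ^ (-a) * (Q:ℝ) ^ (-A) ≤ 1 / (2*(Q:ℝ)) := key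
    _ ≤ |1/(2*(Q:ℝ)) - (p ⟨0, hd⟩ : ℝ)/q| := hfar
    _ = ‖(x - fun i => (p i : ℝ)/q) ⟨0, hd⟩‖ := by
        rw [Pi.sub_apply, Real.norm_eq_abs, hx]
    _ ≤ ‖x - fun i => (p i : ℝ)/q‖ := norm_le_pi_norm _ _
  rcases le_or_gt a 1 with ha1 | ha1
  · -- Case 0 < a ≤ 1
    classical
    set σ : ℝ := ∑ i ∈ Finset.range d, a ^ i with hσdef
    have hσpos : 0 < σ := by
      apply Finset.sum_pos (fun i _ => pow_pos ha i)
      exact Finset.nonempty_range_iff.mpr (by omega)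
    have hfd : fd d a = σ⁻¹ := by
      rw [fd, if_neg (not_le.mpr ha), if_pos ha1]
    have hAσ : 1 < A * σ := by
      have h1 : σ⁻¹ < A := hfd ▸ hA
      calc (1:ℝ) = σ⁻¹ * σ := by field_simp
      _ < A * σ := by gcongr
    have hApos : 0 < A := lt_trans (by positivity) (hfd ▸ hA)
    have hev : ∀ᶠ Q : ℕ in atTop, (Q₀ ≤ Q ∧ 1 ≤ Q) ∧
        (2*κ ≤ (Q:ℝ) ^ A ∧ (2*κ) ^ σ ≤ (Q:ℝ) ^ (A*σ - 1)) :=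
      ((eventually_ge_atTop Q₀).and (eventually_ge_atTop 1)).and
        ((ev_rpow _ hApos (2*κ)).and (ev_rpow _ (by linarith) ((2*κ) ^ σ)))
    obtain ⟨Q, ⟨⟨hQ₀, hQ1⟩, hQB, hQN⟩⟩ := hev.exists
    have hQ0 : (0:ℝ) < Q := by exact_mod_cast hQ1
    set B : ℝ := (Q:ℝ) ^ A / (2*κ) with hBdef
    have hκ2 : (0:ℝ) < 2*κ := by linarith
    have hB0 : 0 < B := by positivity
    have hB1 : 1 ≤ B := by
      rw [hBdef, le_div_iff₀ hκ2, one_mul]; exact hQB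
    set N : ℕ → ℝ := fun i => B ^ (∑ j ∈ Finset.range i, a ^ j) with hNdef
    have hN0 : N 0 = 1 := by simp [hNdef]
    have hNpos : ∀ i, 0 < N i := fun i => Real.rpow_pos_of_pos hB0 _
    have hN1 : ∀ i, 1 ≤ N i := by
      intro i
      have : B ^ (0:ℝ) ≤ B ^ (∑ j ∈ Finset.range i, a ^ j) :=
        Real.rpow_le_rpow_of_exponent_le hB1
          (Finset.sum_nonneg fun j _ => by positivity)
      simpa using this
    have hrec : ∀ i, 2*κ*(N (i+1)) = (N i) ^ a * (Q:ℝ) ^ A := by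
      intro i
      have h1 : N (i+1) = B ^ (a * ∑ j ∈ Finset.range i, a ^ j + 1) := by
        show B ^ (∑ j ∈ Finset.range (i+1), a ^ j) = _
        rw [geom_sum_succ]
      have h2 : B ^ (a * ∑ j ∈ Finset.range i, a ^ j + 1)
          = (N i) ^ a * B := by
        rw [Real.rpow_add hB0, Real.rpow_one, hNdef]
        congr 1
        rw [mul_comm a, Real.rpow_mul hB0.le]
      rw [h1, h2]
      show 2 * κ * (N i ^ a * ((Q:ℝ) ^ A / (2*κ))) = _
      field_simp
    have hNd : (Q:ℝ) ≤ N d := by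
      have h1 : N d = ((Q:ℝ) ^ A) ^ σ / (2*κ) ^ σ := by
        show ((Q:ℝ) ^ A / (2*κ)) ^ (∑ j ∈ Finset.range d, a ^ j) = _
        rw [Real.div_rpow (by positivity) hκ2.le]
      have h2 : ((Q:ℝ) ^ A) ^ σ = (Q:ℝ) ^ (A*σ) := by
        rw [← Real.rpow_mul hQ0.le]
      have h3 : (Q:ℝ) ^ (A*σ - 1) * (Q:ℝ) ^ (1:ℝ) = (Q:ℝ) ^ (A*σ) := by
        rw [← Real.rpow_add hQ0]; ring_nf
      rw [h1, h2, le_div_iff₀ (by positivity)]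
      calc (Q:ℝ) * (2*κ)^σ ≤ (Q:ℝ) * (Q:ℝ) ^ (A*σ-1) := by
            gcongr
      _ = (Q:ℝ) ^ (A*σ) := by rw [← h3, Real.rpow_one]; ring
    set x : Fin d → ℝ := fun i => 1 / (2 * N (i.1+1)) with hx
    refine ⟨x, Q, hQ₀, ?_⟩
    intro q hq1 hqQ p
    have hq0 : (0:ℝ) < q := by exact_mod_cast hq1
    have hq1' : (1:ℝ) ≤ (q:ℝ) := by exact_mod_cast hq1
    have hqQ' : (q:ℝ) ≤ Q := by exact_mod_cast hqQ
    have hex : ∃ i, (q:ℝ) ≤ N (i+1) := by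
      refine ⟨d-1, ?_⟩
      have : d - 1 + 1 = d := by omega
      rw [this]; exact hqQ'.trans hNd
    set i₀ := Nat.find hex with hi₀def
    have hspec : (q:ℝ) ≤ N (i₀+1) := Nat.find_spec hex
    have hi₀d : i₀ < d := by
      have h1 : i₀ ≤ d - 1 := Nat.find_min' hex (by
        have : d - 1 + 1 = d := by omega
        rw [this]; exact hqQ'.trans hNd)
      omega
    have hlow : N i₀ ≤ (q:ℝ) := by
      rcases Nat.eq_zero_or_pos i₀ with h0 | h0
      · rw [h0, hN0]; exact hq1'
      · have h1 : ¬ ((q:ℝ) ≤ N (i₀ - 1 + 1)) := Nat.find_min hex (by omega)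
        have h2 : i₀ - 1 + 1 = i₀ := by omega
        rw [h2] at h1
        linarith [not_le.mp h1]
    have key : κ * (q:ℝ) ^ (-a) * (Q:ℝ) ^ (-A) ≤ 1 / (2 * N (i₀+1)) := by
      have hc0 : (0:ℝ) < 2 * N (i₀+1) := by positivity
      rw [le_div_iff₀ hc0]
      have h1 : (N i₀) ^ a ≤ (q:ℝ) ^ a :=
        Real.rpow_le_rpow (hNpos i₀).le hlow ha.le
      have h2 : κ * (q:ℝ) ^ (-a) * (Q:ℝ) ^ (-A) * (2 * N (i₀+1))
          = (2*κ*(N (i₀+1))) * ((q:ℝ) ^ (-a) * (Q:ℝ) ^ (-A)) := by ring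
      rw [h2, hrec i₀]
      have h3 : (N i₀) ^ a * (Q:ℝ) ^ A * ((q:ℝ) ^ (-a) * (Q:ℝ) ^ (-A))
          ≤ (q:ℝ) ^ a * (Q:ℝ) ^ A * ((q:ℝ) ^ (-a) * (Q:ℝ) ^ (-A)) := by
        have hnn : (0:ℝ) ≤ (q:ℝ) ^ (-a) * (Q:ℝ) ^ (-A) := by positivity
        exact mul_le_mul_of_nonneg_right
          (mul_le_mul_of_nonneg_right h1 (Real.rpow_nonneg hQ0.le A)) hnn
      have h4 : (q:ℝ) ^ a * (Q:ℝ) ^ A * ((q:ℝ) ^ (-a) * (Q:ℝ) ^ (-A)) = 1 := by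
        rw [show (q:ℝ) ^ a * (Q:ℝ) ^ A * ((q:ℝ) ^ (-a) * (Q:ℝ) ^ (-A))
            = ((q:ℝ) ^ a * (q:ℝ) ^ (-a)) * ((Q:ℝ) ^ A * (Q:ℝ) ^ (-A)) from by ring,
          ← Real.rpow_add hq0, ← Real.rpow_add hQ0]
        simp
      linarith
    have hfar := far_of_unit_frac hq1'
      (by linarith : 2*(q:ℝ) ≤ 2 * N (i₀+1)) (p ⟨i₀, hi₀d⟩)
    calc κ * (q:ℝ) ^ (-a) * (Q:ℝ) ^ (-A) ≤ 1 / (2 * N (i₀+1)) := key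
    _ ≤ |1/(2 * N (i₀+1)) - (p ⟨i₀, hi₀d⟩ : ℝ)/q| := hfar
    _ = ‖(x - fun i => (p i : ℝ)/q) ⟨i₀, hi₀d⟩‖ := by
        rw [Pi.sub_apply, Real.norm_eq_abs, hx]
    _ ≤ ‖x - fun i => (p i : ℝ)/q‖ := norm_le_pi_norm _ _
  · -- Case 1 < a : measure-theoretic argument
    classical
    have hd0 : (0:ℝ) < d := by exact_mod_cast hd
    set s : ℝ := (a - 1) * d with hsdef
    have hs0 : 0 < s := mul_pos (by linarith) hd0
    set m : ℝ := max (1 - s) 0 with hmdef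
    have hfd0 : 0 ≤ fd d a := by
      rw [fd, if_neg (not_le.mpr ha), if_neg (not_le.mpr ha1)]
      split_ifs with h
      · have : (0:ℝ) < 1/(d:ℝ) := by positivity
        linarith
      · exact le_refl 0
    have hApos : 0 < A := lt_of_le_of_lt hfd0 hA
    have h1s : 1 - s < A * d := by
      rcases le_or_gt a (1 + 1/(d:ℝ)) with hle | hgt
      · have hfdv : fd d a = 1 + 1/(d:ℝ) - a := by
          rw [fd, if_neg (not_le.mpr ha), if_neg (not_le.mpr ha1), if_pos hle]
        have hAa : 1 + 1/(d:ℝ) - a < A := hfdv ▸ hA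
        have h2 : (1 + 1/(d:ℝ) - a) * d < A * d := mul_lt_mul_of_pos_right hAa hd0
        have h3 : 1 - s = (1 + 1/(d:ℝ) - a) * d := by
          rw [hsdef]; field_simp; ring
        linarith
      · have h4 : 1/(d:ℝ) * d = 1 := by field_simp
        have h5 : 1 - s < 0 := by nlinarith
        nlinarith
    have hmA : m < A * d := max_lt h1s (mul_pos hApos hd0)
    set ε : ℝ := (A * d - m) / 2 with hεdef
    have hε0 : 0 < ε := by rw [hεdef]; linarith
    set K : ℝ := (8*κ)^d * (1 + 1/ε) with hKdef
    have hev : ∀ᶠ Q : ℕ in atTop, (Q₀ ≤ Q ∧ 1 ≤ Q) ∧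
        (κ ≤ (Q:ℝ) ^ A ∧ K + 1 ≤ (Q:ℝ) ^ ε) :=
      ((eventually_ge_atTop Q₀).and (eventually_ge_atTop 1)).and
        ((ev_rpow _ hApos κ).and (ev_rpow _ hε0 (K+1)))
    obtain ⟨Q, ⟨⟨hQ₀, hQ1⟩, hQκ, hQK⟩⟩ := hev.exists
    have hQ0 : (0:ℝ) < Q := by exact_mod_cast hQ1
    have hQ1' : (1:ℝ) ≤ Q := by exact_mod_cast hQ1
    set r : ℕ → ℝ := fun q => κ * (q:ℝ) ^ (-a) * (Q:ℝ) ^ (-A) with hrdef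
    have hr0 : ∀ q : ℕ, 1 ≤ q → 0 < r q := by
      intro q hq
      have hq0 : (0:ℝ) < q := by exact_mod_cast hq
      have := Real.rpow_pos_of_pos hq0 (-a)
      have := Real.rpow_pos_of_pos hQ0 (-A)
      rw [hrdef]; positivity
    have hr1 : ∀ q : ℕ, 1 ≤ q → r q ≤ 1 := by
      intro q hq
      have hq1' : (1:ℝ) ≤ q := by exact_mod_cast hq
      have e1 : (q:ℝ) ^ (-a) ≤ 1 :=
        Real.rpow_le_one_of_one_le_of_nonpos hq1' (by linarith)
      have e2 : (Q:ℝ) ^ (-A) = ((Q:ℝ) ^ A)⁻¹ := Real.rpow_neg hQ0.le A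
      have e3 : κ * ((Q:ℝ) ^ A)⁻¹ ≤ 1 := by
        rw [← div_eq_mul_inv, div_le_one (Real.rpow_pos_of_pos hQ0 A)]
        exact hQκ
      calc r q = κ * (q:ℝ) ^ (-a) * (Q:ℝ) ^ (-A) := rfl
      _ ≤ κ * 1 * (Q:ℝ) ^ (-A) := by
          gcongr
      _ = κ * ((Q:ℝ) ^ A)⁻¹ := by rw [e2]; ring
      _ ≤ 1 := e3
    set box : Set (Fin d → ℝ) := Set.univ.pi (fun _ => Set.Icc (0:ℝ) 1) with hboxdef
    set Bad : Set (Fin d → ℝ) :=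
      ⋃ q ∈ Finset.Icc 1 Q,
        ⋃ p ∈ Fintype.piFinset (fun _ : Fin d => Finset.Icc (-(q:ℤ)) (2*q)),
          Metric.ball (fun i => (p i : ℝ) / q) (r q) with hBaddef
    set g : ℕ → ℝ := fun q => ((3*(q:ℝ)+1) * (2 * r q))^d with hgdef
    have hgnn : ∀ q : ℕ, 1 ≤ q → 0 ≤ g q := by
      intro q hq
      have := (hr0 q hq).le
      have hq0 : (0:ℝ) ≤ q := by positivity
      rw [hgdef]
      positivity
    -- volume of Bad is at most the sum of the g's
    have hstepA : volume Bad ≤ ∑ q ∈ Finset.Icc 1 Q, ENNReal.ofReal (g q) := by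
      rw [hBaddef]
      refine (measure_biUnion_finset_le _ _).trans ?_
      apply Finset.sum_le_sum
      intro q hq
      obtain ⟨hq1, hqQ⟩ := Finset.mem_Icc.mp hq
      refine (measure_biUnion_finset_le _ _).trans ?_
      have hball : ∀ p : Fin d → ℤ,
          volume (Metric.ball (fun i => (p i : ℝ) / q) (r q))
            = ENNReal.ofReal (2 * r q) ^ d := by
        intro p
        rw [volume_pi_ball _ (hr0 q hq1)]
        simp [Real.volume_ball]
      calc ∑ p ∈ Fintype.piFinset (fun _ : Fin d => Finset.Icc (-(q:ℤ)) (2*q)),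
            volume (Metric.ball (fun i => (p i : ℝ) / q) (r q))
          = ((3*q+1)^d : ℕ) * ENNReal.ofReal (2 * r q) ^ d := by
            rw [Finset.sum_congr rfl (fun p _ => hball p), Finset.sum_const,
              nsmul_eq_mul]
            congr 2
            rw [Fintype.card_piFinset]
            have hc : (Finset.Icc (-(q:ℤ)) (2*q)).card = 3*q+1 := by
              rw [Int.card_Icc]
              omega
            simp [hc]
      _ ≤ ENNReal.ofReal (g q) := by
            have hnn1 : (0:ℝ) ≤ 3*(q:ℝ)+1 := by positivity
            have hnn2 : (0:ℝ) ≤ 2 * r q := by linarith [hr0 q hq1]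
            apply le_of_eq
            have hgq : g q = ((3*(q:ℝ)+1) * (2 * r q))^d := rfl
            calc ((3*q+1)^d : ℕ) * ENNReal.ofReal (2 * r q) ^ d
                = ENNReal.ofReal (3*(q:ℝ)+1) ^ d * ENNReal.ofReal (2 * r q) ^ d := by
                  congr 1
                  rw [← ENNReal.ofReal_natCast ((3*q+1)^d), ← ENNReal.ofReal_pow hnn1]
                  congr 1
                  push_cast
                  ring
            _ = (ENNReal.ofReal (3*(q:ℝ)+1) * ENNReal.ofReal (2 * r q)) ^ d := by
                  rw [mul_pow]
            _ = ENNReal.ofReal ((3*(q:ℝ)+1) * (2 * r q)) ^ d := by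
                  rw [ENNReal.ofReal_mul hnn1]
            _ = ENNReal.ofReal (((3*(q:ℝ)+1) * (2 * r q))^d) := by
                  rw [ENNReal.ofReal_pow (by positivity)]
            _ = ENNReal.ofReal (g q) := by rw [hgq]
    -- the real sum is < 1
    have hstepD : ∑ q ∈ Finset.Icc 1 Q, g q < 1 := by
      set C : ℝ := (8*κ)^d * (Q:ℝ)^(m - A*d) with hCdef
      have hC0 : 0 ≤ C := by
        rw [hCdef]
        have := (Real.rpow_pos_of_pos hQ0 (m - A*d)).le
        positivity
      have hterm : ∀ q ∈ Finset.Icc 1 Q, g q ≤ C * (q:ℝ)⁻¹ := by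
        intro q hq
        obtain ⟨hq1, hqQ⟩ := Finset.mem_Icc.mp hq
        have hq0 : (0:ℝ) < q := by exact_mod_cast hq1
        have hq1' : (1:ℝ) ≤ q := by exact_mod_cast hq1
        have hqQ' : (q:ℝ) ≤ Q := by exact_mod_cast hqQ
        have hbase : (3*(q:ℝ)+1) * (2 * r q) ≤ 8*κ * ((q:ℝ)^(1-a) * (Q:ℝ)^(-A)) := by
          have hrq : r q = κ * (q:ℝ) ^ (-a) * (Q:ℝ) ^ (-A) := rfl
          have e2 : (3*(q:ℝ)+1) * (2 * r q)
              = (3*(q:ℝ)+1) * (2*κ) * ((q:ℝ)^(-a) * (Q:ℝ)^(-A)) := by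
            rw [hrq]; ring
          have e3 : (q:ℝ) * (q:ℝ)^(-a) = (q:ℝ)^(1-a) := by
            rw [show (1:ℝ) - a = 1 + (-a) by ring, Real.rpow_add hq0, Real.rpow_one]
          have hnn : (0:ℝ) ≤ (q:ℝ)^(-a) * (Q:ℝ)^(-A) := by positivity
          calc (3*(q:ℝ)+1) * (2 * r q)
              = (3*(q:ℝ)+1) * (2*κ) * ((q:ℝ)^(-a) * (Q:ℝ)^(-A)) := e2
          _ ≤ 4*(q:ℝ) * (2*κ) * ((q:ℝ)^(-a) * (Q:ℝ)^(-A)) := by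
              apply mul_le_mul_of_nonneg_right _ hnn
              nlinarith
          _ = 8*κ * (((q:ℝ) * (q:ℝ)^(-a)) * (Q:ℝ)^(-A)) := by ring
          _ = 8*κ * ((q:ℝ)^(1-a) * (Q:ℝ)^(-A)) := by rw [e3]
        have hg : g q ≤ (8*κ)^d * ((q:ℝ)^(-s) * (Q:ℝ)^(-(A*d))) := by
          have h0 : 0 ≤ (3*(q:ℝ)+1) * (2 * r q) := by
            have := (hr0 q hq1).le
            positivity
          have e4 : ((q:ℝ)^((1:ℝ)-a))^d = (q:ℝ)^(-s) := by
            rw [← Real.rpow_natCast ((q:ℝ)^((1:ℝ)-a)) d, ← Real.rpow_mul hq0.le]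
            congr 1
            rw [hsdef]; ring
          have e5 : ((Q:ℝ)^(-A))^d = (Q:ℝ)^(-(A*d)) := by
            rw [← Real.rpow_natCast ((Q:ℝ)^(-A)) d, ← Real.rpow_mul hQ0.le]
            congr 1
            ring
          calc g q ≤ (8*κ * ((q:ℝ)^(1-a) * (Q:ℝ)^(-A)))^d := pow_le_pow_left₀ h0 hbase d
          _ = (8*κ)^d * (((q:ℝ)^((1:ℝ)-a))^d * ((Q:ℝ)^(-A))^d) := by
              ring
          _ = (8*κ)^d * ((q:ℝ)^(-s) * (Q:ℝ)^(-(A*d))) := by rw [e4, e5]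
        have h7 : (q:ℝ)^((1:ℝ)-s) ≤ (Q:ℝ)^m := by
          rcases le_or_gt 0 (1-s) with hc | hc
          · calc (q:ℝ)^((1:ℝ)-s) ≤ (Q:ℝ)^((1:ℝ)-s) := Real.rpow_le_rpow hq0.le hqQ' hc
            _ ≤ (Q:ℝ)^m := Real.rpow_le_rpow_of_exponent_le hQ1' (le_max_left _ _)
          · calc (q:ℝ)^((1:ℝ)-s) ≤ (q:ℝ)^(0:ℝ) :=
                Real.rpow_le_rpow_of_exponent_le hq1' hc.le
            _ = (Q:ℝ)^(0:ℝ) := by rw [Real.rpow_zero, Real.rpow_zero]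
            _ ≤ (Q:ℝ)^m := Real.rpow_le_rpow_of_exponent_le hQ1' (le_max_right _ _)
        have h6 : (q:ℝ)^(-s) ≤ (Q:ℝ)^m * (q:ℝ)⁻¹ := by
          have e6 : (q:ℝ)^(-s) = (q:ℝ)^((1:ℝ)-s) * (q:ℝ)⁻¹ := by
            rw [show -s = ((1:ℝ)-s) + (-1) by ring, Real.rpow_add hq0,
              Real.rpow_neg_one]
          rw [e6]
          exact mul_le_mul_of_nonneg_right h7 (by positivity)
        have h8 : (0:ℝ) ≤ (8*κ)^d := by positivity
        calc g q ≤ (8*κ)^d * ((q:ℝ)^(-s) * (Q:ℝ)^(-(A*d))) := hg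
        _ ≤ (8*κ)^d * (((Q:ℝ)^m * (q:ℝ)⁻¹) * (Q:ℝ)^(-(A*d))) := by
            apply mul_le_mul_of_nonneg_left _ h8
            exact mul_le_mul_of_nonneg_right h6 (Real.rpow_pos_of_pos hQ0 _).le
        _ = C * (q:ℝ)⁻¹ := by
            rw [hCdef, show m - A*d = m + (-(A*d)) by ring, Real.rpow_add hQ0]
            ring
      have t3 : ∑ q ∈ Finset.Icc 1 Q, (q:ℝ)⁻¹ ≤ 1 + Real.log Q := harm_le Q hQ1
      have t5 : 1 + Real.log Q ≤ (1 + 1/ε) * (Q:ℝ)^ε := by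
        have l1 : (1:ℝ) ≤ (Q:ℝ)^ε := by
          have := Real.rpow_le_rpow_of_exponent_le hQ1' hε0.le
          simpa using this
        have l2 : Real.log ((Q:ℝ)^ε) ≤ (Q:ℝ)^ε - 1 :=
          Real.log_le_sub_one_of_pos (Real.rpow_pos_of_pos hQ0 ε)
        have l3 : Real.log ((Q:ℝ)^ε) = ε * Real.log Q := Real.log_rpow hQ0 ε
        have l4 : ε * Real.log Q ≤ (Q:ℝ)^ε := by rw [← l3]; linarith
        have l5 : Real.log Q ≤ (Q:ℝ)^ε / ε := by
          rw [le_div_iff₀ hε0]; linarith [mul_comm ε (Real.log Q)]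
        have : (1 + 1/ε) * (Q:ℝ)^ε = (Q:ℝ)^ε + (Q:ℝ)^ε/ε := by field_simp
        linarith
      have hsum1 : ∑ q ∈ Finset.Icc 1 Q, g q ≤ C * ((1 + 1/ε) * (Q:ℝ)^ε) := by
        calc ∑ q ∈ Finset.Icc 1 Q, g q ≤ ∑ q ∈ Finset.Icc 1 Q, C * (q:ℝ)⁻¹ :=
            Finset.sum_le_sum hterm
        _ = C * ∑ q ∈ Finset.Icc 1 Q, (q:ℝ)⁻¹ := by rw [Finset.mul_sum]
        _ ≤ C * (1 + Real.log Q) := by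
            apply mul_le_mul_of_nonneg_left t3 hC0
        _ ≤ C * ((1 + 1/ε) * (Q:ℝ)^ε) := by
            apply mul_le_mul_of_nonneg_left t5 hC0
      have hfin : C * ((1 + 1/ε) * (Q:ℝ)^ε) < 1 := by
        have e7 : C * ((1 + 1/ε) * (Q:ℝ)^ε) = K * (Q:ℝ)^(m - A*d + ε) := by
          rw [hCdef, hKdef, show m - A*d + ε = (m - A*d) + ε by ring,
            Real.rpow_add hQ0]
          ring
        have e8 : m - A*d + ε = -ε := by rw [hεdef]; ring
        have hKQ : K < (Q:ℝ)^ε := by linarith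
        have hKnn : 0 ≤ K := by
          rw [hKdef]
          have : (0:ℝ) ≤ 1/ε := by positivity
          positivity
        rw [e7, e8, Real.rpow_neg hQ0.le]
        calc K * ((Q:ℝ)^ε)⁻¹
            < (Q:ℝ)^ε * ((Q:ℝ)^ε)⁻¹ := by
              apply mul_lt_mul_of_pos_right hKQ
              exact inv_pos.mpr (Real.rpow_pos_of_pos hQ0 ε)
          _ = 1 := mul_inv_cancel₀ (Real.rpow_pos_of_pos hQ0 ε).ne'
      linarith
    have hvol : volume Bad < 1 := by
      refine hstepA.trans_lt ?_
      rw [← ENNReal.ofReal_sum_of_nonneg (fun q hq => hgnn q (Finset.mem_Icc.mp hq).1)]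
      rw [← ENNReal.ofReal_one]
      exact ENNReal.ofReal_lt_ofReal_iff_of_nonneg (by
        exact Finset.sum_nonneg (fun q hq => hgnn q (Finset.mem_Icc.mp hq).1)) |>.mpr hstepD
    have hboxvol : volume box = 1 := by
      rw [hboxdef, volume_pi_pi]
      simp [Real.volume_Icc]
    have hne : (box \ Bad).Nonempty := by
      apply nonempty_of_measure_ne_zero (μ := volume)
      intro h0
      have hsub : box ⊆ (box \ Bad) ∪ Bad := by
        intro y hy
        by_cases hB : y ∈ Bad
        · exact Or.inr hB
        · exact Or.inl ⟨hy, hB⟩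
      have hle : volume box ≤ volume (box \ Bad) + volume Bad :=
        (measure_mono hsub).trans (measure_union_le _ _)
      rw [h0, zero_add, hboxvol] at hle
      exact absurd hle (not_le.mpr hvol)
    obtain ⟨x, hxbox, hxBad⟩ := hne
    refine ⟨x, Q, hQ₀, ?_⟩
    intro q hq1 hqQ p
    have hq0 : (0:ℝ) < q := by exact_mod_cast hq1
    have hq1' : (1:ℝ) ≤ q := by exact_mod_cast hq1
    have hxmem : ∀ i, x i ∈ Set.Icc (0:ℝ) 1 := by
      intro i
      have := hxbox
      rw [hboxdef, Set.mem_univ_pi] at this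
      exact this i
    have hreq : κ * (q:ℝ) ^ (-a) * (Q:ℝ) ^ (-A) = r q := rfl
    by_cases hp : ∀ i, p i ∈ Finset.Icc (-(q:ℤ)) (2*q)
    · have hball : Metric.ball (fun i => (p i:ℝ)/q) (r q) ⊆ Bad := by
        rw [hBaddef]
        intro y hy
        exact Set.mem_biUnion (Finset.mem_Icc.mpr ⟨hq1, hqQ⟩)
          (Set.mem_biUnion (Fintype.mem_piFinset.mpr hp) hy)
      have hnot : x ∉ Metric.ball (fun i => (p i:ℝ)/q) (r q) :=
        fun h => hxBad (hball h)
      have hd2 : r q ≤ dist x (fun i => (p i:ℝ)/q) := by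
        by_contra hcon
        exact hnot (Metric.mem_ball.mpr (not_le.mp hcon))
      rw [hreq, ← dist_eq_norm]
      exact hd2
    · push_neg at hp
      obtain ⟨i, hpi⟩ := hp
      rw [Finset.mem_Icc, not_and_or] at hpi
      obtain ⟨hx0, hx1⟩ := hxmem i
      have hfar1 : (1:ℝ) ≤ |x i - (p i:ℝ)/q| := by
        rcases hpi with h | h
        · push_neg at h
          have hle : (p i : ℝ) ≤ -(q:ℝ) := by exact_mod_cast (by omega : p i ≤ -(q:ℤ))
          have hdiv : (p i:ℝ)/q ≤ -1 := by
            rw [div_le_iff₀ hq0]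
            linarith
          have : (1:ℝ) ≤ x i - (p i:ℝ)/q := by linarith
          exact this.trans (le_abs_self _)
        · push_neg at h
          have hge : (2*(q:ℝ)) ≤ (p i : ℝ) := by exact_mod_cast (by omega : (2*(q:ℤ)) ≤ p i)
          have hdiv : (2:ℝ) ≤ (p i:ℝ)/q := by
            rw [le_div_iff₀ hq0]
            linarith
          have : (1:ℝ) ≤ (p i:ℝ)/q - x i := by linarith
          calc (1:ℝ) ≤ (p i:ℝ)/q - x i := this
          _ ≤ |x i - (p i:ℝ)/q| := by rw [abs_sub_comm]; exact le_abs_self _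
      calc κ * (q:ℝ) ^ (-a) * (Q:ℝ) ^ (-A) = r q := hreq
      _ ≤ 1 := hr1 q hq1
      _ ≤ |x i - (p i:ℝ)/q| := hfar1
      _ = ‖(x - fun j => (p j : ℝ)/q) i‖ := by rw [Pi.sub_apply, Real.norm_eq_abs]
      _ ≤ ‖x - fun j => (p j : ℝ)/q‖ := norm_le_pi_norm _ _
end

section
/- Fix d ∈ ℕ (d ≥ 1), a ∈ [0,1], and let A = (∑_{i=0}^{d−1} a^i)^{−1}. Then there exists a constant ε > 0 such that for every sufficiently large integer Q there exists a point x ∈ ℝ^d with the following property: for all q ∈ ℕ with 1 ≤ q ≤ Q and all p ∈ ℤ^d, ‖x − p/q‖_∞ ≥ ε q^{−a} Q^{−A}. In particular, ℝ^d is not uniformly εΨ_{a,A}-approximable. -/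
open Real Finset

/-- The negative half of the critical case `A = (∑_{i<d} a^i)⁻¹` for `a ∈ [0,1]`: there is an
`ε > 0` such that for all sufficiently large `Q` there is a point `x ∈ ℝ^d` admitting no
rational approximation `p/q` with `1 ≤ q ≤ Q` and `‖x − p/q‖_∞ < ε q^(−a) Q^(−A)`.
In particular `ℝ^d` is not uniformly `εΨ_{a,A}`-approximable. -/
theorem exists_eps_critical (d : ℕ) (hd : 1 ≤ d) (a : ℝ) (ha₀ : 0 ≤ a) (ha₁ : a ≤ 1)
    (A : ℝ) (hA : A = (∑ i ∈ Finset.range d, a ^ i)⁻¹) :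
    ∃ ε > 0, ∃ Q₀ : ℕ, ∀ Q : ℕ, Q₀ ≤ Q →
      ∃ x : Fin d → ℝ, ∀ q : ℕ, 1 ≤ q → q ≤ Q → ∀ p : Fin d → ℤ,
        ε * (q : ℝ) ^ (-a) * (Q : ℝ) ^ (-A) ≤ ‖x - fun i => (p i : ℝ) / q‖ := by
  -- the partial geometric sums
  set s : ℕ → ℝ := fun j => ∑ i ∈ Finset.range j, a ^ i with hs
  have hs_nonneg : ∀ j, 0 ≤ s j := fun j =>
    Finset.sum_nonneg fun i _ => pow_nonneg ha₀ i
  have hs_succ : ∀ k, s (k + 1) = 1 + a * s k := by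
    intro k
    simp only [hs]
    rw [geom_sum_succ]
    ring
  have hs_one : ∀ j, 1 ≤ j → 1 ≤ s j := by
    intro j hj
    have hj' : j = (j - 1) + 1 := (Nat.succ_pred_eq_of_pos hj).symm
    rw [hj', hs_succ]
    nlinarith [hs_nonneg (j - 1), mul_nonneg ha₀ (hs_nonneg (j-1))]
  have hsd : 1 ≤ s d := hs_one d hd
  have hsd_pos : 0 < s d := lt_of_lt_of_le one_pos hsd
  have hA_pos : 0 < A := hA ▸ inv_pos.mpr hsd_pos
  have hAsd : A * s d = 1 := by rw [hA]; field_simp; exact div_self hsd_pos.ne'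
  have hs_mono : ∀ j k, j ≤ k → s j ≤ s k := by
    intro j k hjk
    exact Finset.sum_le_sum_of_subset_of_nonneg (Finset.range_subset_range.mpr hjk)
      fun i _ _ => pow_nonneg ha₀ i
  refine ⟨1/2, by norm_num, 1, fun Q hQ => ?_⟩
  have hQ1 : (1 : ℝ) ≤ (Q : ℝ) := by exact_mod_cast hQ
  have hQ0 : (0 : ℝ) < (Q : ℝ) := lt_of_lt_of_le one_pos hQ1
  refine ⟨fun k => (1/2) * (Q : ℝ) ^ (-(A * s (k + 1))), fun q hq1 hqQ p => ?_⟩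
  have hq0 : (0 : ℝ) < (q : ℝ) := by exact_mod_cast hq1
  have hq1' : (1 : ℝ) ≤ (q : ℝ) := by exact_mod_cast hq1
  have hqQ' : (q : ℝ) ≤ (Q : ℝ) := by exact_mod_cast hqQ
  -- choose k
  set S : Finset ℕ := (Finset.range d).filter (fun j => (Q : ℝ) ^ (A * s j) ≤ q) with hS
  have h0S : 0 ∈ S := by
    rw [hS, Finset.mem_filter, Finset.mem_range]
    refine ⟨hd, ?_⟩
    simp only [hs]
    simp only [Finset.range_zero, Finset.sum_empty, mul_zero, Real.rpow_zero]
    exact hq1'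
  have hSne : S.Nonempty := ⟨0, h0S⟩
  set k : ℕ := S.max' hSne with hk
  have hkS : k ∈ S := S.max'_mem hSne
  have hkd : k < d := Finset.mem_range.mp (Finset.mem_filter.mp hkS).1
  have hTk_le : (Q : ℝ) ^ (A * s k) ≤ q := (Finset.mem_filter.mp hkS).2
  have hq_le_T : (q : ℝ) ≤ (Q : ℝ) ^ (A * s (k + 1)) := by
    by_contra hcon
    push_neg at hcon
    by_cases h : k + 1 < d
    · have : k + 1 ∈ S := by
        rw [hS, Finset.mem_filter, Finset.mem_range]
        exact ⟨h, hcon.le⟩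
      have := S.le_max' _ this
      omega
    · have h' : k + 1 = d := by omega
      rw [h', hAsd, Real.rpow_one] at hcon
      exact absurd hqQ' (not_le.mpr hcon)
  set T : ℝ := (Q : ℝ) ^ (A * s (k + 1)) with hT
  have hT_pos : 0 < T := Real.rpow_pos_of_pos hQ0 _
  set c : ℝ := (1/2) * (Q : ℝ) ^ (-(A * s (k + 1))) with hc
  have hcT : c = 1 / (2 * T) := by
    rw [hc, hT, Real.rpow_neg hQ0.le]
    field_simp
  have hc_pos : 0 < c := by
    rw [hcT]; positivity
  -- key bound: (1/2) * q^(-a) * Q^(-A) ≤ c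
  have hkey : (1/2) * (q : ℝ) ^ (-a) * (Q : ℝ) ^ (-A) ≤ c := by
    have hTk_pos : (0 : ℝ) < (Q : ℝ) ^ (A * s k) := Real.rpow_pos_of_pos hQ0 _
    have h1 : (q : ℝ) ^ (-a) ≤ ((Q : ℝ) ^ (A * s k)) ^ (-a) :=
      Real.rpow_le_rpow_of_nonpos hTk_pos hTk_le (neg_nonpos.mpr ha₀)
    have h2 : ((Q : ℝ) ^ (A * s k)) ^ (-a) = (Q : ℝ) ^ (A * s k * (-a)) :=
      (Real.rpow_mul hQ0.le _ _).symm
    have h3 : (Q : ℝ) ^ (A * s k * (-a)) * (Q : ℝ) ^ (-A) = (Q : ℝ) ^ (-(A * s (k + 1))) := by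
      rw [← Real.rpow_add hQ0, hs_succ k]
      ring_nf
    have hQA_pos : (0 : ℝ) < (Q : ℝ) ^ (-A) := Real.rpow_pos_of_pos hQ0 _
    calc (1/2) * (q : ℝ) ^ (-a) * (Q : ℝ) ^ (-A)
        ≤ (1/2) * (((Q : ℝ) ^ (A * s k)) ^ (-a)) * (Q : ℝ) ^ (-A) := by
          have := mul_le_mul_of_nonneg_right h1 hQA_pos.le
          nlinarith
      _ = (1/2) * (Q : ℝ) ^ (-(A * s (k + 1))) := by rw [h2, mul_assoc, h3]
      _ = c := rfl
  -- distance bound at coordinate k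
  set K : Fin d := ⟨k, hkd⟩ with hK
  have hdist : c ≤ |c - (p K : ℝ) / q| := by
    rcases le_or_gt (p K) 0 with hp | hp
    · have hpq : (p K : ℝ) / q ≤ 0 := by
        apply div_nonpos_of_nonpos_of_nonneg _ hq0.le
        exact_mod_cast hp
      have : c ≤ c - (p K : ℝ) / q := by linarith
      exact this.trans (le_abs_self _)
    · have hp1 : (1 : ℝ) ≤ (p K : ℝ) := by exact_mod_cast hp
      have hpq : 1 / (q : ℝ) ≤ (p K : ℝ) / q := by gcongr
      have hTq : 1 / T ≤ 1 / (q : ℝ) := by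
        apply one_div_le_one_div_of_le hq0 hq_le_T
      have h2c : 2 * c = 1 / T := by rw [hcT]; field_simp
      have : c ≤ (p K : ℝ) / q - c := by
        have : 1 / T ≤ (p K : ℝ) / q := hTq.trans hpq
        linarith
      calc c ≤ (p K : ℝ) / q - c := this
        _ ≤ |c - (p K : ℝ) / q| := by rw [abs_sub_comm]; exact le_abs_self _
  calc (1/2) * (q : ℝ) ^ (-a) * (Q : ℝ) ^ (-A) ≤ c := hkey
    _ ≤ |c - (p K : ℝ) / q| := hdist
    _ = ‖((fun k : Fin d => (1/2) * (Q : ℝ) ^ (-(A * s (k + 1)))) - fun i => (p i : ℝ) / q) K‖ := by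
        simp only [Pi.sub_apply, Real.norm_eq_abs, hc]
        rfl
    _ ≤ _ := norm_le_pi_norm _ K
end

section
/- Let X be a complete metric space, 𝒬 ⊆ X a dense subset, and H : 𝒬 → (0,∞) a function. Suppose that for every Q > 0 the set { r ∈ 𝒬 : H(r) ≤ Q } intersects every ball of X in only finitely many points. Fix (a, A) ∈ ℝ² and a subset K ⊆ X with the automorphism property. Suppose that for every κ > 0, K is not uniformly κΨ_{a,A}-approximable, i.e., for every κ > 0 and Q₀ ∈ ℕ there exists x ∈ K and an integer Q ≥ Q₀ such that every r ∈ 𝒬 with H(r) ≤ Q satisfies dist(r,x) ≥ κ H(r)^{−a} Q^{−A}. Then the set { x ∈ X : x is not κΨ_{a,A}-approximable for any κ > 0 } is comeager in X. -/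
open Real Set Metric

private lemma aux_rpow {C u v : ℝ} (hC : 1 ≤ C) (hu : 0 < u) (hv : 0 < v)
    (h1 : u ≤ C * v) (h2 : v ≤ C * u) (t : ℝ) :
    C ^ (-|t|) * v ^ t ≤ u ^ t := by
  have hC0 : (0:ℝ) < C := lt_of_lt_of_le one_pos hC
  rcases le_or_gt 0 t with ht | ht
  · rw [abs_of_nonneg ht]
    have h3 : v / C ≤ u := (div_le_iff₀ hC0).2 (by linarith)
    calc C ^ (-t) * v ^ t = (v / C) ^ t := by
          rw [Real.div_rpow hv.le hC0.le, Real.rpow_neg hC0.le]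
          ring
      _ ≤ u ^ t := Real.rpow_le_rpow (by positivity) h3 ht
  · rw [abs_of_neg ht, neg_neg]
    calc C ^ t * v ^ t = (C * v) ^ t := (Real.mul_rpow hC0.le hv.le).symm
      _ ≤ u ^ t := Real.rpow_le_rpow_of_nonpos hu h1 ht.le

set_option maxHeartbeats 1000000 in
private lemma core_nwd {X : Type*} [MetricSpace X]
    (𝒬 : Set X) (H : X → ℝ) (hHpos : ∀ r ∈ 𝒬, 0 < H r)
    (hfin : ∀ Q : ℝ, 0 < Q → ∀ (z : X) (ρ : ℝ),
      {r | r ∈ 𝒬 ∧ H r ≤ Q ∧ dist r z ≤ ρ}.Finite)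
    (a A : ℝ) (K : Set X)
    (hauto : ∀ B : Set X, IsOpen B → B.Nonempty →
      ∃ Φ : X → X, Function.Bijective Φ ∧
        (∃ L : ℝ, 0 < L ∧ ∀ y z : X, L⁻¹ * dist y z ≤ dist (Φ y) (Φ z) ∧
          dist (Φ y) (Φ z) ≤ L * dist y z) ∧
        Φ '' 𝒬 = 𝒬 ∧
        (∃ C : ℝ, 0 < C ∧ ∀ r ∈ 𝒬, C⁻¹ * H r ≤ H (Φ r) ∧ H (Φ r) ≤ C * H r) ∧
        Φ '' K ⊆ B)
    (hK : ∀ κ > (0 : ℝ), ∀ Q₀ : ℕ, ∃ x ∈ K, ∃ Q : ℕ, Q₀ ≤ Q ∧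
      ∀ r ∈ 𝒬, H r ≤ Q → κ * (H r) ^ (-a) * (Q : ℝ) ^ (-A) ≤ dist r x)
    (κ : ℝ) (hκ : 0 < κ) (Q₀ : ℕ) :
    IsNowhereDense {x : X | ∀ Q : ℕ, Q₀ ≤ Q →
      ∃ r ∈ 𝒬, H r ≤ Q ∧ dist r x < κ * (H r) ^ (-a) * (Q : ℝ) ^ (-A)} := by
  set Aset := {x : X | ∀ Q : ℕ, Q₀ ≤ Q →
      ∃ r ∈ 𝒬, H r ≤ Q ∧ dist r x < κ * (H r) ^ (-a) * (Q : ℝ) ^ (-A)} with hAset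
  rw [IsNowhereDense, eq_empty_iff_forall_notMem]
  intro z hz
  -- the open set B
  obtain ⟨Φ, hbij, ⟨L₀, hL₀, hLip₀⟩, hQim, ⟨C₀, hC₀, hHdist₀⟩, hKB⟩ :=
    hauto (interior (closure Aset)) isOpen_interior ⟨z, hz⟩
  set L := max L₀ 1 with hLdef
  set C := max C₀ 1 with hCdef
  have hL1 : (1:ℝ) ≤ L := le_max_right _ _
  have hC1 : (1:ℝ) ≤ C := le_max_right _ _
  have hL : (0:ℝ) < L := lt_of_lt_of_le one_pos hL1
  have hC : (0:ℝ) < C := lt_of_lt_of_le one_pos hC1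
  have hLip : ∀ y z : X, L⁻¹ * dist y z ≤ dist (Φ y) (Φ z) := by
    intro y z
    have := (hLip₀ y z).1
    have hinv : L⁻¹ ≤ L₀⁻¹ := inv_anti₀ hL₀ (le_max_left _ _)
    calc L⁻¹ * dist y z ≤ L₀⁻¹ * dist y z := by
          exact mul_le_mul_of_nonneg_right hinv dist_nonneg
      _ ≤ dist (Φ y) (Φ z) := this
  have hHdist : ∀ r ∈ 𝒬, C⁻¹ * H r ≤ H (Φ r) ∧ H (Φ r) ≤ C * H r := by
    intro r hr
    obtain ⟨h1, h2⟩ := hHdist₀ r hr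
    have hrpos := hHpos r hr
    constructor
    · calc C⁻¹ * H r ≤ C₀⁻¹ * H r := by
            exact mul_le_mul_of_nonneg_right
              (inv_anti₀ hC₀ (le_max_left _ _)) hrpos.le
        _ ≤ H (Φ r) := h1
    · calc H (Φ r) ≤ C₀ * H r := h2
        _ ≤ C * H r := mul_le_mul_of_nonneg_right (le_max_left _ _) hrpos.le
  -- the constants
  set P₁ := C ^ (|a| : ℝ) with hP₁def
  set P₂ := (2 * C) ^ (|A| : ℝ) with hP₂def
  have hP₁ : (0:ℝ) < P₁ := Real.rpow_pos_of_pos hC _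
  have hP₂ : (0:ℝ) < P₂ := Real.rpow_pos_of_pos (by linarith) _
  set κ' := 2 * κ * L * P₁ * P₂ with hκ'def
  have hκ' : 0 < κ' := by positivity
  set Q₀' := ⌈C * ((max Q₀ 1 : ℕ) + 1)⌉₊ with hQ₀'def
  obtain ⟨x, hxK, Q', hQ'ge, hxapp⟩ := hK κ' hκ' Q₀'
  set Q := ⌊(Q' : ℝ) / C⌋₊ with hQdef
  have hCQ' : C * ((max Q₀ 1 : ℕ) + 1) ≤ (Q' : ℝ) := by
    calc C * ((max Q₀ 1 : ℕ) + 1) ≤ (Q₀' : ℝ) := Nat.le_ceil _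
      _ ≤ (Q' : ℝ) := Nat.cast_le.2 hQ'ge
  have hQ'pos : (0:ℝ) < Q' := by
    have hnn : (0:ℝ) ≤ ((max Q₀ 1 : ℕ) : ℝ) := Nat.cast_nonneg _
    nlinarith
  have hQge : max Q₀ 1 + 1 ≤ Q := by
    apply Nat.le_floor
    rw [le_div_iff₀ hC]
    push_cast
    push_cast at hCQ'
    nlinarith
  have hQQ₀ : Q₀ ≤ Q := le_trans (le_trans (le_max_left _ _) (Nat.le_succ _)) hQge
  have hQ1 : 1 ≤ Q := le_trans (le_trans (le_max_right _ _) (Nat.le_succ _)) hQge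
  have hQpos : (0:ℝ) < Q := by exact_mod_cast Nat.lt_of_lt_of_le Nat.zero_lt_one hQ1
  have hCQle : C * (Q : ℝ) ≤ Q' := by
    have := Nat.floor_le (by positivity : (0:ℝ) ≤ (Q' : ℝ) / C)
    rw [← hQdef] at this
    calc C * (Q : ℝ) ≤ C * ((Q' : ℝ) / C) := mul_le_mul_of_nonneg_left this hC.le
      _ = Q' := by field_simp
  have hQ'le : (Q' : ℝ) ≤ 2 * C * Q := by
    have h1 : (Q' : ℝ) / C < Q + 1 := Nat.lt_floor_add_one _
    have h2 : (Q : ℝ) + 1 ≤ 2 * Q := by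
      have : (1:ℝ) ≤ Q := by exact_mod_cast hQ1
      linarith
    have : (Q' : ℝ) < C * (2 * Q) := by
      calc (Q' : ℝ) = C * ((Q' : ℝ) / C) := by field_simp
        _ < C * ((Q:ℝ) + 1) := by
            exact mul_lt_mul_of_pos_left h1 hC
        _ ≤ C * (2 * Q) := mul_le_mul_of_nonneg_left h2 hC.le
    linarith
  have hQleQ' : (Q : ℝ) ≤ Q' := by nlinarith
  set y := Φ x with hydef
  have hyB : y ∈ interior (closure Aset) := hKB ⟨x, hxK, rfl⟩
  -- Key estimate
  have Key : ∀ r ∈ 𝒬, H r ≤ (Q : ℝ) →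
      2 * (κ * (H r) ^ (-a) * (Q : ℝ) ^ (-A)) ≤ dist r y := by
    intro r hr hrQ
    have hrmem : r ∈ Φ '' 𝒬 := by rw [hQim]; exact hr
    obtain ⟨s, hs𝒬, hΦs⟩ := hrmem
    have hHspos := hHpos s hs𝒬
    have hHrpos := hHpos r hr
    have hd := hHdist s hs𝒬
    rw [hΦs] at hd
    have hHs : H s ≤ C * H r := by
      have := hd.1
      rw [inv_mul_le_iff₀ hC] at this
      exact this
    have hHr : H r ≤ C * H s := hd.2
    have hHsQ' : H s ≤ (Q' : ℝ) := by
      calc H s ≤ C * H r := hHs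
        _ ≤ C * Q := mul_le_mul_of_nonneg_left hrQ hC.le
        _ ≤ Q' := hCQle
    have h1 := hxapp s hs𝒬 hHsQ'
    have h2 : L⁻¹ * dist s x ≤ dist r y := by
      have := hLip s x
      rwa [hΦs] at this
    have e1 : P₁⁻¹ * (H r) ^ (-a) ≤ (H s) ^ (-a) := by
      have := aux_rpow hC1 hHspos hHrpos hHs hHr (-a)
      rwa [abs_neg, Real.rpow_neg hC.le, ← hP₁def] at this
    have e2 : P₂⁻¹ * (Q : ℝ) ^ (-A) ≤ (Q' : ℝ) ^ (-A) := by
      have h2C : (1:ℝ) ≤ 2 * C := by linarith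
      have hv2 : (Q:ℝ) ≤ 2 * C * Q' := by nlinarith
      have := aux_rpow h2C hQ'pos hQpos hQ'le hv2 (-A)
      rwa [abs_neg, Real.rpow_neg (by linarith : (0:ℝ) ≤ 2*C), ← hP₂def] at this
    have hHRnn : (0:ℝ) ≤ (H r) ^ (-a) := (Real.rpow_pos_of_pos hHrpos _).le
    have hQAnn : (0:ℝ) ≤ (Q:ℝ) ^ (-A) := (Real.rpow_pos_of_pos hQpos _).le
    have c1 : κ' * (P₁⁻¹ * (H r) ^ (-a)) * (P₂⁻¹ * (Q:ℝ) ^ (-A)) ≤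
        κ' * (H s) ^ (-a) * (Q' : ℝ) ^ (-A) := by
      gcongr
    have c2 : L⁻¹ * (κ' * (H s) ^ (-a) * (Q' : ℝ) ^ (-A)) ≤ L⁻¹ * dist s x := by
      gcongr
    have heq : 2 * (κ * (H r) ^ (-a) * (Q : ℝ) ^ (-A)) =
        L⁻¹ * (κ' * (P₁⁻¹ * (H r) ^ (-a)) * (P₂⁻¹ * (Q:ℝ) ^ (-A))) := by
      rw [hκ'def]
      field_simp
    calc 2 * (κ * (H r) ^ (-a) * (Q : ℝ) ^ (-A))
        = L⁻¹ * (κ' * (P₁⁻¹ * (H r) ^ (-a)) * (P₂⁻¹ * (Q:ℝ) ^ (-A))) := heq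
      _ ≤ L⁻¹ * (κ' * (H s) ^ (-a) * (Q' : ℝ) ^ (-A)) := by
          exact mul_le_mul_of_nonneg_left c1 (by positivity)
      _ ≤ L⁻¹ * dist s x := c2
      _ ≤ dist r y := h2
  -- margin via finiteness
  have hF : {r | r ∈ 𝒬 ∧ H r ≤ (Q:ℝ) ∧ dist r y ≤ 1}.Finite := hfin Q hQpos y 1
  set G : Finset ℝ :=
    insert (1/2 : ℝ) (hF.toFinset.image (fun r => κ * (H r) ^ (-a) * (Q : ℝ) ^ (-A)))
    with hGdef
  have hGne : G.Nonempty := ⟨1/2, Finset.mem_insert_self _ _⟩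
  set ε := G.min' hGne with hεdef
  have hεpos : 0 < ε := by
    rw [hεdef]
    rw [show (0:ℝ) < G.min' hGne ↔ _ from Finset.lt_min'_iff G hGne]
    intro g hg
    rw [hGdef, Finset.mem_insert] at hg
    rcases hg with rfl | hg
    · norm_num
    · obtain ⟨r, hr, rfl⟩ := Finset.mem_image.1 hg
      rw [Set.Finite.mem_toFinset] at hr
      have := hHpos r hr.1
      positivity
  have hεhalf : ε ≤ 1/2 := Finset.min'_le _ _ (Finset.mem_insert_self _ _)
  have hεF : ∀ r ∈ 𝒬, H r ≤ (Q:ℝ) → dist r y ≤ 1 →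
      ε ≤ κ * (H r) ^ (-a) * (Q : ℝ) ^ (-A) := by
    intro r h1 h2 h3
    apply Finset.min'_le
    rw [hGdef, Finset.mem_insert]
    right
    rw [Finset.mem_image]
    exact ⟨r, by rw [Set.Finite.mem_toFinset]; exact ⟨h1, h2, h3⟩, rfl⟩
  -- y is in the closure of Aset, get a nearby point of Aset
  have hyc : y ∈ closure Aset := interior_subset hyB
  obtain ⟨w, hwA, hwy⟩ := Metric.mem_closure_iff.1 hyc ε hεpos
  obtain ⟨r, hr𝒬, hrQ, hrw⟩ := hwA Q hQQ₀
  have hkey := Key r hr𝒬 hrQ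
  set T := κ * (H r) ^ (-a) * (Q : ℝ) ^ (-A) with hTdef
  have hTpos : 0 < T := by
    have := hHpos r hr𝒬
    positivity
  have htri : dist r y ≤ dist r w + dist y w := by
    rw [dist_comm y w]; exact dist_triangle r w y
  by_cases hrF : dist r y ≤ 1
  · have := hεF r hr𝒬 hrQ hrF
    linarith
  · push_neg at hrF
    linarith

/-- **General comeagerness of non-approximable points.** Let `X` be a complete metric space,
`𝒬 ⊆ X` dense, and `H : X → ℝ` positive on `𝒬` (a Diophantine space), such that for every
`Q > 0` the set `{r ∈ 𝒬 : H r ≤ Q}` meets every ball in finitely many points. Suppose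
`K ⊆ X` has the automorphism property (every nonempty open `B` contains the image of `K`
under some bi-Lipschitz bijection preserving `𝒬` and distorting `H` boundedly), and that
`K` is not uniformly `κΨ_{a,A}`-approximable for any `κ > 0`. Then the set of points of `X`
which are not `κΨ_{a,A}`-approximable for any `κ > 0` is comeager. -/
theorem comeager_not_approx_general {X : Type*} [MetricSpace X] [CompleteSpace X]
    (𝒬 : Set X) (hdense : Dense 𝒬) (H : X → ℝ) (hHpos : ∀ r ∈ 𝒬, 0 < H r)
    (hfin : ∀ Q : ℝ, 0 < Q → ∀ (z : X) (ρ : ℝ),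
      {r | r ∈ 𝒬 ∧ H r ≤ Q ∧ dist r z ≤ ρ}.Finite)
    (a A : ℝ) (K : Set X)
    (hauto : ∀ B : Set X, IsOpen B → B.Nonempty →
      ∃ Φ : X → X, Function.Bijective Φ ∧
        (∃ L : ℝ, 0 < L ∧ ∀ y z : X, L⁻¹ * dist y z ≤ dist (Φ y) (Φ z) ∧
          dist (Φ y) (Φ z) ≤ L * dist y z) ∧
        Φ '' 𝒬 = 𝒬 ∧
        (∃ C : ℝ, 0 < C ∧ ∀ r ∈ 𝒬, C⁻¹ * H r ≤ H (Φ r) ∧ H (Φ r) ≤ C * H r) ∧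
        Φ '' K ⊆ B)
    (hK : ∀ κ > (0 : ℝ), ∀ Q₀ : ℕ, ∃ x ∈ K, ∃ Q : ℕ, Q₀ ≤ Q ∧
      ∀ r ∈ 𝒬, H r ≤ Q → κ * (H r) ^ (-a) * (Q : ℝ) ^ (-A) ≤ dist r x) :
    {x : X | ¬ ∃ κ > (0 : ℝ), ∃ Q₀ : ℕ, ∀ Q : ℕ, Q₀ ≤ Q →
      ∃ r ∈ 𝒬, H r ≤ Q ∧ dist r x < κ * (H r) ^ (-a) * (Q : ℝ) ^ (-A)} ∈ residual X := by
  have hmeagre : IsMeagre {x : X | ∃ κ > (0:ℝ), ∃ Q₀ : ℕ, ∀ Q : ℕ, Q₀ ≤ Q →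
      ∃ r ∈ 𝒬, H r ≤ Q ∧ dist r x < κ * (H r) ^ (-a) * (Q : ℝ) ^ (-A)} := by
    rw [isMeagre_iff_countable_union_isNowhereDense]
    refine ⟨Set.range (fun p : ℕ × ℕ => {x : X | ∀ Q : ℕ, p.2 ≤ Q →
      ∃ r ∈ 𝒬, H r ≤ Q ∧ dist r x < ((p.1 : ℝ) + 1) * (H r) ^ (-a) * (Q : ℝ) ^ (-A)}),
      ?_, Set.countable_range _, ?_⟩
    · rintro t ⟨p, rfl⟩
      exact core_nwd 𝒬 H hHpos hfin a A K hauto hK _ (by positivity) p.2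
    · rintro x ⟨κ, hκ, Q₀, hx⟩
      refine Set.mem_sUnion.2 ⟨_, ⟨(⌈κ⌉₊, Q₀), rfl⟩, ?_⟩
      intro Q hQ
      obtain ⟨r, hr, hrQ, hrx⟩ := hx Q hQ
      refine ⟨r, hr, hrQ, lt_of_lt_of_le hrx ?_⟩
      have hκn : κ ≤ ((⌈κ⌉₊ : ℝ) + 1) := le_trans (Nat.le_ceil κ) (by linarith)
      have h1 : (0:ℝ) ≤ (H r) ^ (-a) := (Real.rpow_pos_of_pos (hHpos r hr) _).le
      have h2 : (0:ℝ) ≤ (Q:ℝ) ^ (-A) := Real.rpow_nonneg (Nat.cast_nonneg _) _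
      exact mul_le_mul_of_nonneg_right (mul_le_mul_of_nonneg_right hκn h1) h2
  rw [← Set.compl_setOf]
  exact hmeagre
end

section
/- Fix (a, A) ∈ ℝ² with a < 1 < min(A, A + a) and A + a < 2 (equivalently, c = (A − |a|)/(min(A, A + a) − 1) > 2). Then the set { x ∈ ℝ : x is not κΨ_{a,A}-approximable for any κ > 0 } has Lebesgue measure zero. -/
/-- `x ∈ ℝ` is `κΨ_{a,A}`-approximable: for some `Q₀` and every integer `Q ≥ Q₀` there are
`1 ≤ q ≤ Q` and `p ∈ ℤ` with `|x − p/q| < κ q^(−a) Q^(−A)`. -/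
def PsiApprox (κ a A : ℝ) (x : ℝ) : Prop :=
  ∃ Q₀ : ℕ, ∀ Q : ℕ, Q₀ ≤ Q →
    ∃ q : ℕ, 1 ≤ q ∧ q ≤ Q ∧ ∃ p : ℤ,
      |x - (p : ℝ) / q| < κ * (q : ℝ) ^ (-a) * (Q : ℝ) ^ (-A)

open MeasureTheory Filter Set

lemma rat_approx (a A : ℝ) (x : ℝ) (hx : ¬ Irrational x) : ∃ κ > 0, PsiApprox κ a A x := by
  rw [Irrational, not_not] at hx
  obtain ⟨r, rfl⟩ := hx
  refine ⟨1, one_pos, r.den, fun Q hQ => ⟨r.den, r.pos, hQ, r.num, ?_⟩⟩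
  have hd : (0:ℝ) < r.den := by exact_mod_cast r.pos
  have hQ0 : (0:ℝ) < Q := lt_of_lt_of_le hd (by exact_mod_cast hQ)
  rw [Rat.cast_def, sub_self, abs_zero]
  positivity

lemma good_approx (a A s : ℝ) (ha : a < 1) (hA1 : 1 < A)
    (hs1 : s - 1 = (1 - a) / (A - 1))
    (x c : ℝ) (hc : 0 < c)
    (hb : ∀ q : ℕ, 1 ≤ q → ∀ p : ℤ, c * (q : ℝ) ^ (-s) ≤ |x - (p : ℝ) / q|) :
    PsiApprox (c ^ (-(A-1))) a A x := by
  have hA0 : (0:ℝ) < A - 1 := by linarith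
  have h1a : (0:ℝ) < 1 - a := by linarith
  have hs0 : (0:ℝ) < s - 1 := hs1 ▸ div_pos h1a hA0
  refine ⟨1, fun Q hQ => ?_⟩
  have hQ0 : (0:ℝ) < Q := by exact_mod_cast hQ
  obtain ⟨j, k, hk0, hkQ, hd⟩ := Real.exists_int_int_abs_mul_sub_le x hQ
  refine ⟨k.toNat, by omega, by omega, j, ?_⟩
  have hqk : (k.toNat : ℝ) = (k : ℝ) := by exact_mod_cast Int.toNat_of_nonneg hk0.le
  rw [hqk]
  have hk0R : (0:ℝ) < k := by exact_mod_cast hk0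
  have hkQR : (k:ℝ) ≤ Q := by exact_mod_cast hkQ
  -- Dirichlet bound: |x - j/k| < 1/(k*Q)
  have hdir : |x - (j:ℝ)/k| < 1 / ((k:ℝ) * Q) := by
    have h1 : x - (j:ℝ)/k = ((k:ℝ) * x - j)/k := by field_simp
    rw [h1, abs_div, abs_of_pos hk0R]
    rw [div_lt_div_iff₀ hk0R (by positivity)]
    calc |(k:ℝ) * x - j| * ((k:ℝ) * Q) ≤ (1 / (Q + 1)) * ((k:ℝ) * Q) := by
          apply mul_le_mul_of_nonneg_right hd (by positivity)
      _ < 1 * k := by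
          rw [one_mul, div_mul_eq_mul_div, div_lt_iff₀ (by positivity)]
          nlinarith
  -- lower bound gives k large
  have hlow := hb k.toNat (by omega) j
  rw [hqk] at hlow
  have h2 : c * Q < (k:ℝ) ^ (s - 1) := by
    have h3 : c * (k:ℝ) ^ (-s) < 1 / ((k:ℝ) * Q) := lt_of_le_of_lt hlow hdir
    rw [Real.rpow_neg hk0R.le, ← div_eq_mul_inv, div_lt_div_iff₀ (Real.rpow_pos_of_pos hk0R s) (by positivity)] at h3
    rw [Real.rpow_sub hk0R, Real.rpow_one, lt_div_iff₀ hk0R]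
    nlinarith
  -- raise to negative power (a-1)/(s-1) = -(A-1)
  have hexp : (a - 1) / (s - 1) = -(A - 1) := by
    rw [hs1]
    field_simp
    ring
  have h4 : (k:ℝ) ^ (a - 1) < (c * Q) ^ (-(A-1)) := by
    have := Real.rpow_lt_rpow_of_neg (by positivity) h2
      (z := (a-1)/(s-1)) (by rw [hexp]; linarith)
    rw [← Real.rpow_mul hk0R.le, show (s-1) * ((a-1)/(s-1)) = a - 1 by field_simp, hexp] at this
    exact this
  have h5 : (c * Q) ^ (-(A-1)) = c ^ (-(A-1)) * (Q:ℝ) ^ (-(A-1)) :=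
    Real.mul_rpow hc.le hQ0.le
  calc |x - (j:ℝ)/k| < 1 / ((k:ℝ) * Q) := hdir
    _ = (k:ℝ) ^ (-a) * (k:ℝ) ^ (a-1) * (Q:ℝ)⁻¹ := by
        rw [← Real.rpow_add hk0R, show -a + (a-1) = -1 by ring, Real.rpow_neg_one,
          one_div, mul_inv]
    _ < (k:ℝ) ^ (-a) * (c ^ (-(A-1)) * (Q:ℝ) ^ (-(A-1))) * (Q:ℝ)⁻¹ := by
        apply mul_lt_mul_of_pos_right _ (by positivity)
        apply mul_lt_mul_of_pos_left _ (Real.rpow_pos_of_pos hk0R _)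
        rw [← h5]; exact h4
    _ = c ^ (-(A-1)) * (k:ℝ) ^ (-a) * (Q:ℝ) ^ (-A) := by
        rw [show -A = -(A-1) + -1 by ring, Real.rpow_add hQ0, Real.rpow_neg_one]
        ring

lemma abs_sub_div (x : ℝ) (q : ℕ) (hq : 1 ≤ q) (p : ℤ) :
    |x - (p:ℝ)/q| = |(q:ℝ) * x - p| / q := by
  have hq0 : (0:ℝ) < q := by exact_mod_cast hq
  rw [show x - (p:ℝ)/q = ((q:ℝ)*x - p)/q by field_simp, abs_div, abs_of_pos hq0]

lemma exists_c (s : ℝ) (x : ℝ) (hx : Irrational x) (m : ℕ)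
    (hm : ∀ q : ℕ, m ≤ q → ∀ p : ℤ, (q:ℝ)^(-s) ≤ |x - (p:ℝ)/q|) :
    ∃ c > 0, ∀ q : ℕ, 1 ≤ q → ∀ p : ℤ, c * (q:ℝ)^(-s) ≤ |x - (p:ℝ)/q| := by
  set g : ℕ → ℝ := fun q => (q:ℝ)^s * |x - (round ((q:ℝ)*x) : ℝ)/q| with hg
  have hF : (Finset.Icc 1 (m+1)).Nonempty := ⟨1, by simp⟩
  set c : ℝ := min 1 ((Finset.Icc 1 (m+1)).inf' hF g) with hc
  have hgpos : ∀ q ∈ Finset.Icc 1 (m+1), 0 < g q := by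
    intro q hqmem
    have hq1 : 1 ≤ q := (Finset.mem_Icc.mp hqmem).1
    have hq0 : (0:ℝ) < q := by exact_mod_cast hq1
    apply mul_pos (Real.rpow_pos_of_pos hq0 s)
    rw [abs_pos, sub_ne_zero]
    intro h
    have h2 := hx
    rw [Irrational] at h2
    exact h2 ⟨(round ((q:ℝ)*x) : ℚ) / (q:ℚ), by push_cast; rw [← h]⟩
  refine ⟨c, lt_min one_pos (by rwa [Finset.lt_inf'_iff]), fun q hq1 p => ?_⟩
  have hq0 : (0:ℝ) < q := by exact_mod_cast hq1
  have hrs : (0:ℝ) ≤ (q:ℝ)^(-s) := (Real.rpow_pos_of_pos hq0 _).le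
  rcases le_or_gt (m+1) q with hcase | hcase
  · calc c * (q:ℝ)^(-s) ≤ 1 * (q:ℝ)^(-s) :=
        mul_le_mul_of_nonneg_right (min_le_left _ _) hrs
      _ = (q:ℝ)^(-s) := one_mul _
      _ ≤ |x - (p:ℝ)/q| := hm q (by omega) p
  · have hmem : q ∈ Finset.Icc 1 (m+1) := Finset.mem_Icc.mpr ⟨hq1, by omega⟩
    have h1 : c ≤ g q := (min_le_right _ _).trans (Finset.inf'_le g hmem)
    have h2 : |x - (round ((q:ℝ)*x) : ℝ)/q| ≤ |x - (p:ℝ)/q| := by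
      rw [abs_sub_div x q hq1 p, abs_sub_div x q hq1 (round ((q:ℝ)*x))]
      exact (div_le_div_iff_of_pos_right hq0).mpr (round_le ((q:ℝ)*x) p)
    calc c * (q:ℝ)^(-s) ≤ g q * (q:ℝ)^(-s) := mul_le_mul_of_nonneg_right h1 hrs
      _ = ((q:ℝ)^s * (q:ℝ)^(-s)) * |x - (round ((q:ℝ)*x) : ℝ)/q| := by rw [hg]; ring
      _ = |x - (round ((q:ℝ)*x) : ℝ)/q| := by
          rw [← Real.rpow_add hq0]; simp
      _ ≤ |x - (p:ℝ)/q| := h2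

lemma measure_W (s : ℝ) (hs : 2 < s) :
    volume {x : ℝ | ∀ m : ℕ, ∃ q : ℕ, m ≤ q ∧ ∃ p : ℤ, |x - (p:ℝ)/q| < (q:ℝ)^(-s)} = 0 := by
  set SS : ℕ → ℕ → Set ℝ := fun N q =>
    {x | ∃ p : ℤ, |x - (p:ℝ)/q| < (q:ℝ)^(-s)} ∩ Icc (-(N:ℝ)) N with hSS
  set f : ℕ → ℕ → ℝ := fun N q => 4*((N:ℝ)+1)*(q:ℝ)^(1-s) + 2*(q:ℝ)^(-s) with hf
  have hbound : ∀ N q : ℕ, volume (SS N q) ≤ ENNReal.ofReal (f N q) := by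
    intro N q
    rcases Nat.eq_zero_or_pos q with rfl | hq1
    · have : SS N 0 = ∅ := by
        rw [eq_empty_iff_forall_notMem]
        rintro x ⟨⟨p, hp⟩, -⟩
        rw [Nat.cast_zero, Real.zero_rpow (by linarith : -s ≠ 0)] at hp
        exact absurd hp (not_lt.mpr (abs_nonneg _))
      rw [this, measure_empty]
      exact zero_le
    · have hq0 : (0:ℝ) < q := by exact_mod_cast hq1
      have hcard : ∀ n : ℕ, (Finset.Icc (-(n:ℤ)) (n:ℤ)).card = 2*n+1 := by
        intro n; rw [Int.card_Icc]; omega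
      set k : ℕ := (N+1)*q with hk
      have hsub : SS N q ⊆ ⋃ p ∈ Finset.Icc (-(k:ℤ)) (k:ℤ),
          Metric.ball ((p:ℝ)/q) ((q:ℝ)^(-s)) := by
        rintro x ⟨⟨p, hp⟩, hx1, hx2⟩
        have hr1 : (q:ℝ)^(-s) ≤ 1 :=
          Real.rpow_le_one_of_one_le_of_nonpos (by exact_mod_cast hq1) (by linarith)
        have habs : |(p:ℝ)/q| ≤ (N:ℝ) + 1 := by
          have : |(p:ℝ)/q| ≤ |(p:ℝ)/q - x| + |x| := by
            simpa using abs_add_le ((p:ℝ)/q - x) x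
          have hxN : |x| ≤ N := abs_le.mpr ⟨hx1, hx2⟩
          rw [abs_sub_comm] at this
          linarith [hp.le.trans hr1]
        have hpk : |p| ≤ (k:ℤ) := by
          have h1 : |(p:ℝ)| ≤ ((N:ℝ)+1) * q := by
            rw [abs_div, abs_of_pos hq0, div_le_iff₀ hq0] at habs
            exact habs
          have h2 : ((k:ℕ):ℝ) = ((N:ℝ)+1)*q := by rw [hk]; push_cast; ring
          exact_mod_cast h1.trans_eq h2.symm
        refine mem_biUnion (Finset.mem_Icc.mpr (abs_le.mp hpk)) ?_
        rw [Metric.mem_ball, Real.dist_eq]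
        exact hp
      calc volume (SS N q) ≤ ∑ p ∈ Finset.Icc (-(k:ℤ)) (k:ℤ),
            volume (Metric.ball ((p:ℝ)/q) ((q:ℝ)^(-s))) :=
          (measure_mono hsub).trans (measure_biUnion_finset_le _ _)
        _ = (Finset.Icc (-(k:ℤ)) (k:ℤ)).card • ENNReal.ofReal (2 * (q:ℝ)^(-s)) := by
            simp [Real.volume_ball]
        _ = ((2*k+1 : ℕ) : ENNReal) * ENNReal.ofReal (2 * (q:ℝ)^(-s)) := by
            rw [hcard k, nsmul_eq_mul]
        _ = ENNReal.ofReal ((2*k+1 : ℕ) * (2 * (q:ℝ)^(-s))) := by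
            rw [← ENNReal.ofReal_natCast (2*k+1), ← ENNReal.ofReal_mul (by positivity)]
        _ ≤ ENNReal.ofReal (f N q) := by
            apply ENNReal.ofReal_le_ofReal
            have hqq : (q:ℝ) * (q:ℝ)^(-s) = (q:ℝ)^(1-s) := by
              rw [show (1:ℝ)-s = 1 + -s by ring, Real.rpow_add hq0, Real.rpow_one]
            have hkr : ((2*k+1 : ℕ) : ℝ) = 2*((N:ℝ)+1)*q + 1 := by
              rw [hk]; push_cast; ring
            rw [hkr]
            simp only [hf]
            have h9 : (2*((N:ℝ)+1)*q + 1) * (2*(q:ℝ)^(-s))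
                = 4*((N:ℝ)+1)*((q:ℝ)*(q:ℝ)^(-s)) + 2*(q:ℝ)^(-s) := by ring
            rw [h9, hqq]
  have hlim : ∀ N : ℕ, volume (limsup (SS N) atTop) = 0 := by
    intro N
    apply measure_limsup_atTop_eq_zero
    have hsum : Summable (f N) :=
      ((Real.summable_nat_rpow.mpr (by linarith : 1 - s < -1)).mul_left _).add
        ((Real.summable_nat_rpow.mpr (by linarith : -s < -1)).mul_left _)
    have hnn : ∀ q, 0 ≤ f N q := by
      intro q
      simp only [hf]
      positivity
    have hle : ∑' q, volume (SS N q) ≤ ENNReal.ofReal (∑' q, f N q) := by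
      calc ∑' q, volume (SS N q) ≤ ∑' q, ENNReal.ofReal (f N q) :=
          ENNReal.tsum_le_tsum (hbound N)
        _ = ENNReal.ofReal (∑' q, f N q) := (ENNReal.ofReal_tsum_of_nonneg hnn hsum).symm
    exact ne_top_of_le_ne_top ENNReal.ofReal_ne_top hle
  have hsubU : {x : ℝ | ∀ m : ℕ, ∃ q : ℕ, m ≤ q ∧ ∃ p : ℤ, |x - (p:ℝ)/q| < (q:ℝ)^(-s)}
      ⊆ ⋃ N : ℕ, limsup (SS N) atTop := by
    intro x hx
    refine mem_iUnion.mpr ⟨⌈|x|⌉₊, ?_⟩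
    rw [mem_limsup_iff_frequently_mem, frequently_atTop]
    intro m
    obtain ⟨q, hq, p, hp⟩ := hx m
    refine ⟨q, hq, ⟨p, hp⟩, ?_⟩
    have : |x| ≤ (⌈|x|⌉₊ : ℝ) := Nat.le_ceil _
    exact ⟨by linarith [abs_le.mp this, neg_abs_le x, le_abs_self x],
      by linarith [le_abs_self x]⟩
  exact measure_mono_null hsubU (measure_iUnion_null hlim)

/-- If `a < 1 < min(A, A+a)` and `A + a < 2`, then the set of `x ∈ ℝ` which are not
`κΨ_{a,A}`-approximable for any `κ > 0` is a Lebesgue nullset. -/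
theorem measure_zero_not_approx (a A : ℝ)
    (ha : a < 1) (hA : 1 < min A (A + a)) (hAa : A + a < 2) :
    MeasureTheory.volume {x : ℝ | ¬ ∃ κ > 0, PsiApprox κ a A x} = 0 := by
  have hA1 : 1 < A := lt_of_lt_of_le hA (min_le_left _ _)
  have hA0 : (0:ℝ) < A - 1 := by linarith
  have h1a : (0:ℝ) < 1 - a := by linarith
  set s : ℝ := 1 + (1 - a)/(A - 1) with hsdef
  have hs1 : s - 1 = (1 - a)/(A - 1) := by rw [hsdef]; ring
  have hs2 : 2 < s := by
    rw [hsdef]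
    have : 1 < (1 - a)/(A - 1) := (one_lt_div hA0).mpr (by linarith)
    linarith
  apply measure_mono_null _ (measure_W s hs2)
  intro x hx
  simp only [mem_setOf_eq] at hx ⊢
  intro m
  by_contra hcon
  push_neg at hcon
  have hirr : Irrational x := by
    by_contra h'
    exact hx (rat_approx a A x h')
  obtain ⟨c, hc, hb⟩ := exists_c s x hirr m hcon
  exact hx ⟨c ^ (-(A-1)), Real.rpow_pos_of_pos hc _, good_approx a A s ha hA1 hs1 x c hc hb⟩
end

section
/- Fix (a, A) ∈ ℝ² with a < 1 < min(A, A + a), and set b = min(A, A + a) − 1 and c = (A − |a|)/b. Then there exists a constant C'' > 0 (depending only on a and A) with the following property: if x ∈ ℝ is irrational with continued fraction denominators (q_n), D > 0, and q_{n+1} ≤ D q_n^{c−1} for all sufficiently large n, then x is (C'' D^b)Ψ_{a,A}-approximable, i.e., there exists Q₀ ∈ ℕ such that for every integer Q ≥ Q₀ there exist 1 ≤ q ≤ Q and p ∈ ℤ with |x − p/q| < C'' D^b q^{−a} Q^{−A}. -/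
open GenContFract

private lemma contsAux_int (x : ℝ) : ∀ n : ℕ, ∃ (p : ℤ) (q : ℕ),
    ((GenContFract.of x).contsAux n).a = (p : ℝ) ∧
    ((GenContFract.of x).contsAux n).b = (q : ℝ) := by
  have key : ∀ n : ℕ,
      (∃ (p : ℤ) (q : ℕ), ((GenContFract.of x).contsAux n).a = (p : ℝ) ∧
        ((GenContFract.of x).contsAux n).b = (q : ℝ)) ∧
      (∃ (p : ℤ) (q : ℕ), ((GenContFract.of x).contsAux (n + 1)).a = (p : ℝ) ∧
        ((GenContFract.of x).contsAux (n + 1)).b = (q : ℝ)) := by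
    intro n
    induction n with
    | zero =>
      constructor
      · exact ⟨1, 0, by simp [contsAux], by simp [contsAux]⟩
      · exact ⟨⌊x⌋, 1, by simp [contsAux, of_h_eq_floor], by simp [contsAux]⟩
    | succ n ih =>
      refine ⟨ih.2, ?_⟩
      obtain ⟨⟨p0, q0, ha0, hb0⟩, ⟨p1, q1, ha1, hb1⟩⟩ := ih
      rcases h : (GenContFract.of x).s.get? n with _ | gp
      · rw [show (GenContFract.of x).contsAux (n + 2) = (GenContFract.of x).contsAux (n + 1) from
          contsAux_stable_step_of_terminated h]
        exact ⟨p1, q1, ha1, hb1⟩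
      · obtain ⟨hgpa, z, hgpb⟩ := of_partNum_eq_one_and_exists_int_partDen_eq h
        have hz1 : (1 : ℝ) ≤ (z : ℝ) := by
          rw [← hgpb]; exact of_one_le_get?_partDen (partDen_eq_s_b h)
        have hz : (1 : ℤ) ≤ z := by exact_mod_cast hz1
        obtain ⟨m, hm⟩ : ∃ m : ℕ, z = (m : ℤ) :=
          ⟨z.toNat, (Int.toNat_of_nonneg (by linarith)).symm⟩
        have hrec := contsAux_recurrence h rfl rfl (g := GenContFract.of x) (n := n)
        rw [hrec]
        refine ⟨z * p1 + p0, m * q1 + q0, ?_, ?_⟩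
        · show gp.b * ((GenContFract.of x).contsAux (n + 1)).a + gp.a * ((GenContFract.of x).contsAux n).a = _
          rw [hgpa, hgpb, ha1, ha0]; push_cast; ring
        · show gp.b * ((GenContFract.of x).contsAux (n + 1)).b + gp.a * ((GenContFract.of x).contsAux n).b = _
          rw [hgpa, hgpb, hb1, hb0, hm]; push_cast; ring
  exact fun n => (key n).1

private lemma dens_int (x : ℝ) (n : ℕ) : ∃ (p : ℤ) (q : ℕ),
    (GenContFract.of x).nums n = (p : ℝ) ∧ (GenContFract.of x).dens n = (q : ℝ) := by
  obtain ⟨p, q, h1, h2⟩ := contsAux_int x (n + 1)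
  refine ⟨p, q, ?_, ?_⟩
  · rw [GenContFract.num_eq_conts_a, GenContFract.nth_cont_eq_succ_nth_contAux]; exact h1
  · rw [GenContFract.den_eq_conts_b, GenContFract.nth_cont_eq_succ_nth_contAux]; exact h2

/-- If `a < 1 < min(A, A+a)`, `b = min(A, A+a) − 1`, `c = (A − |a|)/b`, then there is a
constant `C'' > 0` such that every irrational `x` whose continued fraction denominators
`(q_n)` eventually satisfy `q_{n+1} ≤ D q_n^(c−1)` is `(C'' D^b)Ψ_{a,A}`-approximable. -/
theorem den_growth_implies_approx (a A b c : ℝ)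
    (ha : a < 1) (hA : 1 < min A (A + a))
    (hb : b = min A (A + a) - 1) (hc : c = (A - |a|) / b) :
    ∃ C'' > 0, ∀ x : ℝ, Irrational x → ∀ D > 0,
      (∃ N : ℕ, ∀ n ≥ N,
        (GenContFract.of x).dens (n + 1) ≤ D * ((GenContFract.of x).dens n) ^ (c - 1)) →
      ∃ Q₀ : ℕ, ∀ Q : ℕ, Q₀ ≤ Q →
        ∃ q : ℕ, 1 ≤ q ∧ q ≤ Q ∧ ∃ p : ℤ,
          |x - (p : ℝ) / q| < C'' * D ^ b * (q : ℝ) ^ (-a) * (Q : ℝ) ^ (-A) := by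
  classical
  have hbpos : 0 < b := by rw [hb]; linarith
  have hbne : b ≠ 0 := ne_of_gt hbpos
  refine ⟨(2 : ℝ) ^ |a|, by positivity, ?_⟩
  intro x hx D hD hgrow
  obtain ⟨N, hN⟩ := hgrow
  have hterm : ∀ n, ¬(GenContFract.of x).TerminatedAt n := by
    intro n h
    rcases (GenContFract.terminates_iff_rat x).mp ⟨n, h⟩ with ⟨r, hr⟩
    exact hx ⟨r, hr.symm⟩
  have hfib : ∀ n : ℕ, (Nat.fib (n + 1) : ℝ) ≤ (GenContFract.of x).dens n := fun n =>
    GenContFract.succ_nth_fib_le_of_nth_den (Or.inr (hterm _))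
  have hone : ∀ n : ℕ, (1 : ℝ) ≤ (GenContFract.of x).dens n := by
    intro n
    refine le_trans ?_ (hfib n)
    exact_mod_cast Nat.one_le_iff_ne_zero.mpr (Nat.fib_pos.mpr n.succ_pos).ne'
  refine ⟨max (N + 1) (max 1 (⌈(GenContFract.of x).dens N⌉₊)), ?_⟩
  intro Q hQ
  have hQ1 : 1 ≤ Q := le_trans (le_max_of_le_right (le_max_left _ _)) hQ
  have hNQ : N + 1 ≤ Q := le_trans (le_max_left _ _) hQ
  have hQpos : (0 : ℝ) < Q := by exact_mod_cast hQ1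
  have hdN : (GenContFract.of x).dens N ≤ (Q : ℝ) := by
    refine le_trans (Nat.le_ceil _) ?_
    exact_mod_cast le_trans (le_max_of_le_right (le_max_right _ _)) hQ
  set B := Q + 5 with hB
  have hNB : N ≤ B := by omega
  have hPB : ¬ (GenContFract.of x).dens B ≤ (Q : ℝ) := by
    intro h
    have h1 : (B + 1 : ℕ) ≤ Nat.fib (B + 1) := Nat.le_fib_self (by omega)
    have h2 : ((B : ℝ) + 1) ≤ (GenContFract.of x).dens B :=
      le_trans (by exact_mod_cast h1) (hfib B)
    have hQB : (Q : ℝ) < (B : ℝ) + 1 := by exact_mod_cast (by omega : Q < B + 1)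
    linarith
  obtain ⟨n, hNn, hPn, hv⟩ : ∃ n, N ≤ n ∧ (GenContFract.of x).dens n ≤ (Q : ℝ) ∧
      (Q : ℝ) < (GenContFract.of x).dens (n + 1) := by
    have hspec : (GenContFract.of x).dens
        (Nat.findGreatest (fun m => (GenContFract.of x).dens m ≤ (Q : ℝ)) B) ≤ (Q : ℝ) :=
      Nat.findGreatest_spec (P := fun m => (GenContFract.of x).dens m ≤ (Q : ℝ)) (m := N) (n := B) hNB hdN
    have hnB : Nat.findGreatest (fun m => (GenContFract.of x).dens m ≤ (Q : ℝ)) B < B := by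
      rcases lt_or_eq_of_le (Nat.findGreatest_le
        (P := fun m => (GenContFract.of x).dens m ≤ (Q : ℝ)) B) with h | h
      · exact h
      · exact absurd (h ▸ hspec) hPB
    refine ⟨_, Nat.le_findGreatest hNB hdN, hspec, lt_of_not_ge ?_⟩
    exact Nat.findGreatest_is_greatest
      (P := fun m => (GenContFract.of x).dens m ≤ (Q : ℝ)) (n := B)
      (Nat.lt_succ_self _) (by omega)
  obtain ⟨p, k, hpk, hk⟩ := dens_int x n
  obtain ⟨p1, k1, hpk1, hk1⟩ := dens_int x (n + 1)
  have hgrown := hN n hNn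
  have habs := GenContFract.abs_sub_convs_le (hterm n) (v := x)
  have hone_n := hone n
  have hone_n1 := hone (n + 1)
  rw [hk] at hPn hone_n
  rw [hk1] at hv hone_n1
  rw [hk, hk1] at hgrown
  rw [GenContFract.conv_eq_num_div_den, hpk, hk, hk1] at habs
  have hu1 : (1 : ℝ) ≤ (k : ℝ) := hone_n
  have hupos : (0 : ℝ) < (k : ℝ) := by linarith
  have hvpos : (0 : ℝ) < (k1 : ℝ) := by linarith
  have hk1' : 1 ≤ k := by exact_mod_cast hu1
  have hkpos : 0 < k := hk1'
  have hkQ : k ≤ Q := by exact_mod_cast hPn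
  have hc1b : (c - 1) * b = A - |a| - b := by rw [hc]; field_simp
  have hQD : (0 : ℝ) < (Q : ℝ) / D := div_pos hQpos hD
  have h1 : (Q : ℝ) / D < (k : ℝ) ^ (c - 1) := by
    rw [div_lt_iff₀ hD]
    exact hv.trans_le (hgrown.trans_eq (mul_comm _ _))
  have h2 : ((Q : ℝ) / D) ^ b < ((k : ℝ) ^ (c - 1)) ^ b := Real.rpow_lt_rpow hQD.le h1 hbpos
  have h3 : ((k : ℝ) ^ (c - 1)) ^ b = (k : ℝ) ^ ((c - 1) * b) := (Real.rpow_mul hupos.le _ _).symm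
  have h4 : D ^ b * ((Q : ℝ) / D) ^ b = (Q : ℝ) ^ b := by
    rw [← Real.mul_rpow hD.le hQD.le, mul_div_cancel₀ _ (ne_of_gt hD)]
  have hDb : (0 : ℝ) < D ^ b := Real.rpow_pos_of_pos hD b
  rcases le_or_gt 0 a with ha0 | ha0
  · -- case 0 ≤ a : take q = qₙ
    have hmin : min A (A + a) = A := min_eq_left (by linarith)
    have hbA : b = A - 1 := by rw [hb, hmin]
    have hcb : (c - 1) * b = 1 - a := by rw [hc1b, abs_of_nonneg ha0, hbA]; ring
    have hu1a : ((Q : ℝ) / D) ^ b < (k : ℝ) ^ (1 - a) := by rw [← hcb, ← h3]; exact h2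
    refine ⟨k, hk1', hkQ, p, ?_⟩
    have key : (Q : ℝ) ^ A < D ^ b * (k : ℝ) ^ (1 - a) * (k1 : ℝ) := by
      calc (Q : ℝ) ^ A = D ^ b * ((Q : ℝ) / D) ^ b * (Q : ℝ) := by
            rw [h4, show A = b + 1 by linarith, Real.rpow_add hQpos, Real.rpow_one]
        _ < D ^ b * (k : ℝ) ^ (1 - a) * (k1 : ℝ) :=
            mul_lt_mul'' (mul_lt_mul_of_pos_left hu1a hDb) hv (by positivity) hQpos.le
    have hfinal : 1 / ((k : ℝ) * (k1 : ℝ)) < D ^ b * (k : ℝ) ^ (-a) * (Q : ℝ) ^ (-A) := by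
      rw [div_lt_iff₀ (by positivity)]
      have hu_split : (k : ℝ) ^ (1 - a) = (k : ℝ) ^ (-a) * (k : ℝ) := by
        rw [show (1 - a) = -a + 1 by ring, Real.rpow_add hupos, Real.rpow_one]
      have e1 : D ^ b * (k : ℝ) ^ (-a) * (Q : ℝ) ^ (-A) * ((k : ℝ) * (k1 : ℝ))
          = (D ^ b * (k : ℝ) ^ (1 - a) * (k1 : ℝ)) * (Q : ℝ) ^ (-A) := by
        rw [hu_split]; ring
      rw [e1]
      have e2 : (Q : ℝ) ^ A * (Q : ℝ) ^ (-A) = 1 := by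
        rw [← Real.rpow_add hQpos]; simp
      calc (1 : ℝ) = (Q : ℝ) ^ A * (Q : ℝ) ^ (-A) := e2.symm
        _ < (D ^ b * (k : ℝ) ^ (1 - a) * (k1 : ℝ)) * (Q : ℝ) ^ (-A) :=
            mul_lt_mul_of_pos_right key (Real.rpow_pos_of_pos hQpos _)
    have h2a : (1 : ℝ) ≤ (2 : ℝ) ^ |a| := by
      have := Real.rpow_le_rpow_of_exponent_le (one_le_two) (abs_nonneg a)
      simpa using this
    calc |x - (p : ℝ) / (k : ℝ)| ≤ 1 / ((k : ℝ) * (k1 : ℝ)) := habs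
      _ < D ^ b * (k : ℝ) ^ (-a) * (Q : ℝ) ^ (-A) := hfinal
      _ = 1 * (D ^ b * (k : ℝ) ^ (-a) * (Q : ℝ) ^ (-A)) := (one_mul _).symm
      _ ≤ (2 : ℝ) ^ |a| * (D ^ b * (k : ℝ) ^ (-a) * (Q : ℝ) ^ (-A)) :=
          mul_le_mul_of_nonneg_right h2a (by positivity)
      _ = (2 : ℝ) ^ |a| * D ^ b * (k : ℝ) ^ (-a) * (Q : ℝ) ^ (-A) := by ring
  · -- case a < 0 : take q = m * qₙ with m = Q / qₙ
    have hmin : min A (A + a) = A + a := min_eq_right (by linarith)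
    have hbA : b = A + a - 1 := by rw [hb, hmin]
    have hcb : (c - 1) * b = 1 := by rw [hc1b, abs_of_neg ha0, hbA]; ring
    have hu' : ((Q : ℝ) / D) ^ b < (k : ℝ) := by
      have h5 := h2; rw [h3, hcb, Real.rpow_one] at h5; exact h5
    set m := Q / k with hmdef
    have hm1 : 1 ≤ m := (Nat.one_le_div_iff hkpos).mpr hkQ
    set q := k * m with hqdef
    have e : q + Q % k = Q := by rw [hqdef, hmdef]; exact Nat.div_add_mod Q k
    have hmod : Q % k < k := Nat.mod_lt Q hkpos
    have hkq : k ≤ q := by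
      calc k = k * 1 := (Nat.mul_one k).symm
        _ ≤ k * m := Nat.mul_le_mul_left k hm1
    have hq1 : 1 ≤ q := le_trans hk1' hkq
    have hqQ : q ≤ Q := by omega
    have hQ2q : Q < 2 * q := by omega
    refine ⟨q, hq1, hqQ, (m : ℤ) * p, ?_⟩
    have hmne : ((m : ℕ) : ℝ) ≠ 0 := by positivity
    have hqcast : ((q : ℕ) : ℝ) = (k : ℝ) * (m : ℝ) := by rw [hqdef]; push_cast; ring
    have hwpos : (0 : ℝ) < (q : ℝ) := by positivity
    have hfrac : (((m : ℤ) * p : ℤ) : ℝ) / ((q : ℕ) : ℝ) = (p : ℝ) / (k : ℝ) := by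
      rw [hqcast]; push_cast
      rw [mul_comm ((k : ℕ) : ℝ) ((m : ℕ) : ℝ), mul_div_mul_left _ _ hmne]
    have hna : (0 : ℝ) < -a := by linarith
    have hwQ2 : (Q : ℝ) / 2 < (q : ℝ) := by
      rw [div_lt_iff₀ (by norm_num : (0:ℝ) < 2)]
      exact_mod_cast (by omega : Q < q * 2)
    have step1 : (Q : ℝ) ^ (-a) ≤ (2 : ℝ) ^ |a| * (q : ℝ) ^ (-a) := by
      have hs : ((Q : ℝ) / 2) ^ (-a) ≤ (q : ℝ) ^ (-a) :=
        Real.rpow_le_rpow (by positivity) hwQ2.le hna.le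
      have heq : (2 : ℝ) ^ |a| * ((Q : ℝ) / 2) ^ (-a) = (Q : ℝ) ^ (-a) := by
        rw [abs_of_neg ha0, ← Real.mul_rpow (by norm_num) (by positivity)]
        congr 1; field_simp
      calc (Q : ℝ) ^ (-a) = (2 : ℝ) ^ |a| * ((Q : ℝ) / 2) ^ (-a) := heq.symm
        _ ≤ (2 : ℝ) ^ |a| * (q : ℝ) ^ (-a) :=
            mul_le_mul_of_nonneg_left hs (by positivity)
    have key : (Q : ℝ) ^ (A + a) < D ^ b * (k : ℝ) * (k1 : ℝ) := by
      calc (Q : ℝ) ^ (A + a) = D ^ b * ((Q : ℝ) / D) ^ b * (Q : ℝ) := by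
            rw [h4, show A + a = b + 1 by linarith, Real.rpow_add hQpos, Real.rpow_one]
        _ < D ^ b * (k : ℝ) * (k1 : ℝ) :=
            mul_lt_mul'' (mul_lt_mul_of_pos_left hu' hDb) hv (by positivity) hQpos.le
    have hcore : 1 / ((k : ℝ) * (k1 : ℝ)) < D ^ b * (Q : ℝ) ^ (-a) * (Q : ℝ) ^ (-A) := by
      rw [div_lt_iff₀ (by positivity)]
      have e3 : (Q : ℝ) ^ (-a) * (Q : ℝ) ^ (-A) = ((Q : ℝ) ^ (A + a))⁻¹ := by
        rw [← Real.rpow_add hQpos, show -a + -A = -(A + a) by ring,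
          Real.rpow_neg hQpos.le]
      have e2 : D ^ b * (Q : ℝ) ^ (-a) * (Q : ℝ) ^ (-A) * ((k : ℝ) * (k1 : ℝ))
          = (D ^ b * (k : ℝ) * (k1 : ℝ)) * ((Q : ℝ) ^ (-a) * (Q : ℝ) ^ (-A)) := by ring
      rw [e2, e3, ← div_eq_mul_inv, lt_div_iff₀ (Real.rpow_pos_of_pos hQpos _), one_mul]
      exact key
    calc |x - (((m : ℤ) * p : ℤ) : ℝ) / ((q : ℕ) : ℝ)| = |x - (p : ℝ) / (k : ℝ)| := by
          rw [hfrac]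
      _ ≤ 1 / ((k : ℝ) * (k1 : ℝ)) := habs
      _ < D ^ b * (Q : ℝ) ^ (-a) * (Q : ℝ) ^ (-A) := hcore
      _ ≤ D ^ b * ((2 : ℝ) ^ |a| * (q : ℝ) ^ (-a)) * (Q : ℝ) ^ (-A) := by
          apply mul_le_mul_of_nonneg_right _ (Real.rpow_nonneg hQpos.le _)
          exact mul_le_mul_of_nonneg_left step1 hDb.le
      _ = (2 : ℝ) ^ |a| * D ^ b * (q : ℝ) ^ (-a) * (Q : ℝ) ^ (-A) := by ring
end

section
/- Fix d ∈ ℕ (d ≥ 1). There exist ε > 0 and x ∈ ℝ^d such that x is not εΨ_{1+1/d, 0}-approximable: for every q ∈ ℕ with q ≥ 1 and every p ∈ ℤ^d, ‖x − p/q‖_∞ ≥ ε q^{−(1+1/d)}. (Such x is a badly approximable vector; consequently, for a = 1 + 1/d and A = 0, ℝ^d is not εΨ_{a,A}-approximable.) -/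
set_option maxHeartbeats 1000000
set_option synthInstance.maxHeartbeats 400000

open Polynomial

def badSeq (d : ℕ) (q : ℤ) (p : Fin d → ℤ) : ℕ → ℤ
  | 0 => q
  | (k + 1) => if h : k < d then p ⟨k, h⟩ else 2 * badSeq d q p (k - d)
  decreasing_by omega

lemma badSeq_zero (d : ℕ) (q : ℤ) (p : Fin d → ℤ) : badSeq d q p 0 = q := by rw [badSeq]

lemma badSeq_of_le (d : ℕ) (q : ℤ) (p : Fin d → ℤ) (m : ℕ) (h1 : 1 ≤ m) (h2 : m ≤ d) :
    badSeq d q p m = p ⟨m - 1, by omega⟩ := by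
  obtain ⟨k, rfl⟩ : ∃ k, m = k + 1 := ⟨m - 1, by omega⟩
  rw [badSeq, dif_pos (by omega : k < d)]
  congr 1


lemma badSeq_rec (d : ℕ) (q : ℤ) (p : Fin d → ℤ) (m : ℕ) (h1 : d + 1 ≤ m) :
    badSeq d q p m = 2 * badSeq d q p (m - (d + 1)) := by
  obtain ⟨k, rfl⟩ : ∃ k, m = k + 1 := ⟨m - 1, by omega⟩
  rw [badSeq, dif_neg (by omega : ¬ k < d)]
  congr 2
  omega


lemma det_abs_le_aux {n : ℕ} (A : Matrix (Fin n) (Fin n) ℝ) (r : Fin n → ℝ)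
    (h : ∀ i j, |A i j| ≤ r i) :
    |A.det| ≤ (n.factorial : ℝ) * ∏ i, r i := by
  rw [Matrix.det_apply]
  calc |∑ σ : Equiv.Perm (Fin n), Equiv.Perm.sign σ • ∏ i, A (σ i) i|
      ≤ ∑ σ : Equiv.Perm (Fin n), |Equiv.Perm.sign σ • ∏ i, A (σ i) i| :=
        Finset.abs_sum_le_sum_abs _ _
    _ ≤ ∑ σ : Equiv.Perm (Fin n), ∏ i, r i := by
        apply Finset.sum_le_sum
        intro σ _
        have key : |∏ i, A (σ i) i| ≤ ∏ i, r i := by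
          calc |∏ i, A (σ i) i| = ∏ i, |A (σ i) i| := Finset.abs_prod _ _
            _ ≤ ∏ i, r (σ i) := Finset.prod_le_prod (fun i _ => abs_nonneg _)
                (fun i _ => h (σ i) i)
            _ = ∏ i, r i := Equiv.prod_comp σ r
        rcases Int.units_eq_one_or (Equiv.Perm.sign σ) with h1 | h1 <;>
          simp [h1, abs_neg, key]
    _ = (n.factorial : ℝ) * ∏ i, r i := by
        rw [Finset.sum_const, Finset.card_univ, Fintype.card_perm, Fintype.card_fin,
          nsmul_eq_mul]


lemma irred_aux (n : ℕ) (hn : 1 ≤ n) : Irreducible ((X : ℚ[X]) ^ n - C 2) := by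
  have hn0 : n ≠ 0 := by omega
  set fz : ℤ[X] := X ^ n - C 2 with hfz
  have hmon : fz.Monic := monic_X_pow_sub_C (2 : ℤ) hn0
  have hdeg : fz.degree = n := degree_X_pow_sub_C (by omega) 2
  have hprime : (Ideal.span {(2:ℤ)}).IsPrime :=
    (Ideal.span_singleton_prime (by norm_num)).mpr Int.prime_two
  have hirrz : Irreducible fz := by
    apply Polynomial.irreducible_of_eisenstein_criterion hprime
    · rw [hmon.leadingCoeff, Ideal.mem_span_singleton]
      norm_num
    · intro m hm
      rw [hdeg, Nat.cast_lt] at hm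
      rw [hfz, coeff_sub, coeff_X_pow, if_neg (by omega), coeff_C]
      rcases eq_or_ne m 0 with rfl | h
      · simp [Ideal.mem_span_singleton]
      · simp [h]
    · rw [hdeg]; exact_mod_cast hn0.bot_lt
    · rw [hfz, coeff_sub, coeff_X_pow, if_neg (by omega), coeff_C, if_pos rfl,
        Ideal.span_singleton_pow, Ideal.mem_span_singleton]
      norm_num
    · exact hmon.isPrimitive
  have := (Polynomial.IsPrimitive.Int.irreducible_iff_irreducible_map_cast hmon.isPrimitive).mp hirrz
  rwa [hfz, Polynomial.map_sub, Polynomial.map_pow, Polynomial.map_X, Polynomial.map_C,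
    map_ofNat] at this

lemma hankel_det_ne_zero (d : ℕ) (hd : 1 ≤ d) (P : ℕ → ℤ) (hP0 : P 0 ≠ 0)
    (hrec : ∀ m, d + 1 ≤ m → m ≤ 2 * d → P m = 2 * P (m - (d + 1))) :
    (Matrix.of fun j k : Fin (d + 1) => P ((j : ℕ) + (k : ℕ))).det ≠ 0 := by
  set n := d + 1 with hn
  set fq : ℚ[X] := X ^ n - C 2 with hfq
  have hirr : Irreducible fq := irred_aux n (by omega)
  haveI : Fact (Irreducible fq) := ⟨hirr⟩
  have hfq0 : fq ≠ 0 := hirr.ne_zero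
  have hdeg : fq.natDegree = n := natDegree_X_pow_sub_C
  set pb := AdjoinRoot.powerBasis hfq0 with hpb
  have hdim : pb.dim = n := hdeg
  set bb : Module.Basis (Fin n) ℚ (AdjoinRoot fq) := pb.basis.reindex (finCongr hdim) with hbb
  have hbb_apply : ∀ i : Fin n, bb i = AdjoinRoot.root fq ^ (i : ℕ) := by
    intro i
    rw [hbb, Module.Basis.reindex_apply, pb.basis_eq_pow]
    simp [hpb]
  have hroot_pow : (AdjoinRoot.root fq) ^ n = 2 := by
    have h1 : AdjoinRoot.mk fq (X ^ n - C 2) = 0 := by rw [← hfq]; exact AdjoinRoot.mk_self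
    rw [map_sub, map_pow, AdjoinRoot.mk_X, AdjoinRoot.mk_C, sub_eq_zero] at h1
    rw [h1]
    norm_num
  set L : AdjoinRoot fq →ₗ[ℚ] ℚ := ∑ k : Fin n, ((P k : ℚ) • bb.coord k) with hL
  have hLb : ∀ i : Fin n, L (bb i) = (P i : ℚ) := by
    intro i
    rw [hL]
    simp only [LinearMap.sum_apply, LinearMap.smul_apply, Module.Basis.coord_apply, Module.Basis.repr_self]
    rw [Finset.sum_eq_single i]
    · simp
    · intro k _ hk
      simp [Finsupp.single_apply, (Ne.symm hk : ¬ i = k)]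
    · simp
  have hLpow : ∀ m : ℕ, m ≤ 2 * d → L (AdjoinRoot.root fq ^ m) = (P m : ℚ) := by
    intro m hm
    rcases le_or_gt m d with h | h
    · have : AdjoinRoot.root fq ^ m = bb ⟨m, by omega⟩ := (hbb_apply ⟨m, by omega⟩).symm
      rw [this, hLb]
    · have h2 : m - n ≤ d := by omega
      have h3 : AdjoinRoot.root fq ^ m
          = (2 : ℚ) • AdjoinRoot.root fq ^ (m - n) := by
        have hsplit : AdjoinRoot.root fq ^ m
            = AdjoinRoot.root fq ^ (m - n) * AdjoinRoot.root fq ^ n := by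
          rw [← pow_add]; congr 1; omega
        rw [hsplit, hroot_pow, Algebra.smul_def]
        have h4 : (algebraMap ℚ (AdjoinRoot fq)) 2 = 2 := map_ofNat _ 2
        rw [h4]
        ring
      rw [h3, map_smul, smul_eq_mul]
      have : AdjoinRoot.root fq ^ (m - n) = bb ⟨m - n, by omega⟩ :=
        (hbb_apply ⟨m - n, by omega⟩).symm
      rw [this, hLb, hrec m (by omega) hm]
      push_cast
      ring
  -- the determinant argument over ℚ
  set Hq : Matrix (Fin n) (Fin n) ℚ :=
    Matrix.of (fun j k : Fin n => ((P ((j : ℕ) + (k : ℕ)) : ℚ))) with hHq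
  have hdetq : Hq.det ≠ 0 := by
    intro h0
    obtain ⟨v, hv, hmul⟩ := (Matrix.exists_mulVec_eq_zero_iff).mpr h0
    set z : AdjoinRoot fq := bb.equivFun.symm v with hz
    have hzne : z ≠ 0 := by
      rw [hz]
      intro h
      exact hv (by simpa using (LinearEquiv.map_eq_zero_iff _).mp h)
    have hzsum : z = ∑ k : Fin n, v k • bb k := bb.equivFun_symm_apply v
    have hLrow : ∀ j : Fin n, L (AdjoinRoot.root fq ^ (j : ℕ) * z) = 0 := by
      intro j
      have expand : AdjoinRoot.root fq ^ (j : ℕ) * z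
          = ∑ k : Fin n, v k • AdjoinRoot.root fq ^ ((j : ℕ) + (k : ℕ)) := by
        rw [hzsum, Finset.mul_sum]
        apply Finset.sum_congr rfl
        intro k _
        rw [hbb_apply k, mul_smul_comm, ← pow_add]
      rw [expand, map_sum]
      have heach : ∀ k : Fin n, L (v k • AdjoinRoot.root fq ^ ((j : ℕ) + (k : ℕ)))
          = v k * (P ((j : ℕ) + (k : ℕ)) : ℚ) := by
        intro k
        rw [map_smul, smul_eq_mul, hLpow _ (by omega)]
      simp_rw [heach]
      have := congrFun hmul j
      simpa [Matrix.mulVec, dotProduct, hHq, mul_comm] using this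
    -- L vanishes on 1 = z⁻¹ * z, contradiction
    have hone : (1 : AdjoinRoot fq)
        = ∑ j : Fin n, bb.repr z⁻¹ j • (AdjoinRoot.root fq ^ (j : ℕ) * z) := by
      have h1 : (1 : AdjoinRoot fq) = z⁻¹ * z := (inv_mul_cancel₀ hzne).symm
      rw [h1]
      nth_rewrite 1 [← bb.sum_repr z⁻¹]
      rw [Finset.sum_mul]
      apply Finset.sum_congr rfl
      intro j _
      rw [hbb_apply j, smul_mul_assoc]
    have hL1 : L 1 = 0 := by
      rw [hone, map_sum]
      simp_rw [map_smul, hLrow]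
      simp
    have hLP0 : L 1 = (P 0 : ℚ) := by
      have h1 : (1 : AdjoinRoot fq) = AdjoinRoot.root fq ^ (0 : ℕ) := by simp
      rw [h1, hLpow 0 (by omega)]
    rw [hLP0] at hL1
    exact hP0 (by exact_mod_cast hL1)
  -- transfer to ℤ
  intro h0
  apply hdetq
  have hcast : Hq.det
      = (Int.castRingHom ℚ) ((Matrix.of fun j k : Fin (d+1) => P ((j : ℕ) + (k : ℕ))).det) := by
    rw [RingHom.map_det]
    rfl
  rw [hcast, h0]
  exact map_zero _


/-- There exist `ε > 0` and a (badly approximable) point `x ∈ ℝ^d` such that every rational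
vector `p/q` satisfies `‖x − p/q‖_∞ ≥ ε q^(−(1+1/d))`; hence `x` is not
`εΨ_{1+1/d,0}`-approximable and `ℝ^d` is not `εΨ_{1+1/d,0}`-approximable. -/
theorem exists_badly_approximable (d : ℕ) (hd : 1 ≤ d) :
    ∃ ε > 0, ∃ x : Fin d → ℝ, ∀ q : ℕ, 1 ≤ q → ∀ p : Fin d → ℤ,
      ε * (q : ℝ) ^ (-(1 + 1 / (d : ℝ))) ≤ ‖x - fun i => (p i : ℝ) / q‖ := by
  have hd0 : (d : ℝ) ≠ 0 := by positivity
  set n := d + 1 with hn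
  set θ : ℝ := (2 : ℝ) ^ ((n : ℝ)⁻¹) with hθ
  have hθpos : 0 < θ := Real.rpow_pos_of_pos two_pos _
  have hθ1 : 1 ≤ θ := by
    rw [hθ, show (1:ℝ) = (2:ℝ) ^ (0:ℝ) from (Real.rpow_zero 2).symm]
    apply Real.rpow_le_rpow_of_exponent_le one_le_two
    positivity
  have hθn : θ ^ n = 2 := by
    rw [hθ, ← Real.rpow_natCast ((2:ℝ) ^ ((n:ℝ)⁻¹)) n, ← Real.rpow_mul (by norm_num),
      inv_mul_cancel₀ (by positivity : (n:ℝ) ≠ 0), Real.rpow_one]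
  have hθpow4 : ∀ m, m ≤ 2 * d → θ ^ m ≤ 4 := by
    intro m hm
    calc θ ^ m ≤ θ ^ (2 * n) := pow_le_pow_right₀ hθ1 (by omega)
      _ = (θ ^ n) ^ 2 := by rw [← pow_mul, mul_comm]
      _ = 4 := by rw [hθn]; norm_num
  set ε : ℝ := 1 / ((n.factorial : ℝ) * 6 * 10 ^ d) with hε
  have hfact1 : (1:ℝ) ≤ (n.factorial : ℝ) := by exact_mod_cast n.factorial_pos
  have h10d : (1:ℝ) ≤ 10 ^ d := one_le_pow₀ (by norm_num)
  have hεpos : 0 < ε := by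
    apply div_pos one_pos
    positivity
  have hε1 : ε ≤ 1 := by
    rw [hε, div_le_one (by positivity)]
    nlinarith
  refine ⟨ε, hεpos, fun i => θ ^ ((i : ℕ) + 1), ?_⟩
  intro q hq p
  by_contra hcon
  push_neg at hcon
  have hqpos : (0:ℝ) < q := by exact_mod_cast hq
  have hq1 : (1:ℝ) ≤ q := by exact_mod_cast hq
  set F : ℝ := ‖(fun i : Fin d => θ ^ ((i : ℕ) + 1)) - fun i => (p i : ℝ) / q‖ with hF
  have hF0 : 0 ≤ F := norm_nonneg _
  have hFi : ∀ i : Fin d, |θ ^ ((i : ℕ) + 1) - (p i : ℝ) / q| ≤ F := by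
    intro i
    have := norm_le_pi_norm ((fun i : Fin d => θ ^ ((i : ℕ) + 1)) - fun i => (p i : ℝ) / q) i
    simpa [Real.norm_eq_abs] using this
  set E : ℝ := q * F with hE
  have hE0 : 0 ≤ E := by positivity
  have hElt : E < ε * (q : ℝ) ^ (-(1 / (d:ℝ))) := by
    have h1 : E < q * (ε * (q : ℝ) ^ (-(1 + 1 / (d:ℝ)))) :=
      mul_lt_mul_of_pos_left hcon hqpos
    calc E < q * (ε * (q : ℝ) ^ (-(1 + 1 / (d:ℝ)))) := h1
      _ = ε * ((q:ℝ) ^ (1:ℝ) * (q : ℝ) ^ (-(1 + 1 / (d:ℝ)))) := by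
          rw [Real.rpow_one]; ring
      _ = ε * (q : ℝ) ^ (-(1 / (d:ℝ))) := by
          rw [← Real.rpow_add hqpos]
          ring_nf
  have hEd : E ^ d < ε * (q:ℝ)⁻¹ := by
    have hq1d : ((q:ℝ) ^ (-(1 / (d:ℝ)))) ^ d = (q:ℝ)⁻¹ := by
      rw [← Real.rpow_natCast ((q:ℝ) ^ (-(1 / (d:ℝ)))) d, ← Real.rpow_mul (le_of_lt hqpos),
        show -(1 / (d:ℝ)) * d = -1 by field_simp]
      exact Real.rpow_neg_one _
    calc E ^ d < (ε * (q : ℝ) ^ (-(1 / (d:ℝ)))) ^ d :=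
          pow_lt_pow_left₀ hElt hE0 (by omega)
      _ = ε ^ d * (q:ℝ)⁻¹ := by rw [mul_pow, hq1d]
      _ ≤ ε * (q:ℝ)⁻¹ := by
          apply mul_le_mul_of_nonneg_right _ (by positivity)
          exact pow_le_of_le_one (le_of_lt hεpos) hε1 (by omega)
  have hE1 : E ≤ 1 := by
    apply le_of_lt
    calc E < ε * (q : ℝ) ^ (-(1 / (d:ℝ))) := hElt
      _ ≤ 1 * 1 := by
          apply mul_le_mul hε1 _ (Real.rpow_nonneg (le_of_lt hqpos) _) one_pos.le
          rw [show (1:ℝ) = (q:ℝ) ^ (0:ℝ) from (Real.rpow_zero _).symm]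
          apply Real.rpow_le_rpow_of_exponent_le hq1
          simp [le_of_lt hqpos]
      _ = 1 := by norm_num
  -- the integer sequence and error terms
  set P : ℕ → ℤ := badSeq d q p with hP
  set e : ℕ → ℝ := fun m => q * θ ^ m - (P m : ℝ) with he
  have he0 : e 0 = 0 := by simp [he, hP, badSeq_zero]
  have heE : ∀ m, 1 ≤ m → m ≤ d → |e m| ≤ E := by
    intro m h1 h2
    have hPm : P m = p ⟨m - 1, by omega⟩ := badSeq_of_le d q p m h1 h2
    set i : Fin d := ⟨m - 1, by omega⟩ with hi
    have hidx : (i : ℕ) + 1 = m := by show m - 1 + 1 = m; omega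
    have h3 := hFi i
    rw [hidx] at h3
    have h4 : e m = q * (θ ^ m - (p i : ℝ) / q) := by
      simp only [he, hPm]
      field_simp
    rw [h4, abs_mul, abs_of_pos hqpos]
    exact mul_le_mul_of_nonneg_left h3 (le_of_lt hqpos)
  have herec : ∀ m, n ≤ m → m ≤ 2 * d → e m = 2 * e (m - n) := by
    intro m h1 h2
    have hPm : P m = 2 * P (m - n) := badSeq_rec d q p m h1
    have hsplit : θ ^ m = θ ^ (m - n) * θ ^ n := by rw [← pow_add]; congr 1; omega
    simp only [he]
    rw [hPm, hsplit, hθn]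
    push_cast
    ring
  have he2E : ∀ m, m ≤ 2 * d → |e m| ≤ 2 * E := by
    intro m hm
    rcases Nat.eq_zero_or_pos m with rfl | hm1
    · rw [he0]; simpa using by positivity
    rcases le_or_gt m d with h | h
    · linarith [heE m hm1 h]
    · rw [herec m (by omega) hm, abs_mul]
      have hrest : |e (m - n)| ≤ E := by
        rcases Nat.eq_zero_or_pos (m - n) with h0 | h0
        · rw [h0, he0]; simpa
        · exact heE _ h0 (by omega)
      rw [abs_two]
      linarith
  -- Hankel matrix
  set Hz : Matrix (Fin n) (Fin n) ℤ := Matrix.of fun j k : Fin n => P ((j : ℕ) + (k : ℕ))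
    with hHz
  have hdz : Hz.det ≠ 0 := by
    apply hankel_det_ne_zero d hd P
    · rw [hP, badSeq_zero]; exact_mod_cast Nat.one_le_iff_ne_zero.mp hq
    · intro m h1 h2; exact badSeq_rec d q p m h1
  have h1le : (1:ℝ) ≤ |((Hz.det : ℤ) : ℝ)| := by
    rw [← Int.cast_abs]
    exact_mod_cast Int.one_le_abs hdz
  -- real matrix
  set HR : Matrix (Fin n) (Fin n) ℝ := Matrix.of fun j k : Fin n => ((P ((j:ℕ) + (k:ℕ)) : ℤ) : ℝ)
    with hHR
  have hHRdet : ((Hz.det : ℤ) : ℝ) = HR.det := by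
    rw [show ((Hz.det : ℤ) : ℝ) = (Int.castRingHom ℝ) Hz.det from rfl, RingHom.map_det]
    rfl
  -- row reduction
  set M : Matrix (Fin n) (Fin n) ℝ := Matrix.of fun j k : Fin n =>
    (if k = j then (1:ℝ) else 0) + (if k = 0 then (if j = 0 then 0 else -θ^(j:ℕ)) else 0)
    with hM
  have hMdet : M.det = 1 := by
    rw [Matrix.det_of_lowerTriangular M]
    · apply Finset.prod_eq_one
      intro j _
      rcases eq_or_ne j 0 with rfl | hj
      · simp [hM]
      · simp [hM, hj]
    · intro i j hij
      have hij' : i < j := hij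
      have h1 : j ≠ i := ne_of_gt hij'
      have h2 : j ≠ 0 := by
        intro h; rw [h] at hij'; exact Fin.not_lt_zero i hij'
      simp [hM, h1, h2]
  set G : Matrix (Fin n) (Fin n) ℝ := M * HR with hG
  have hGdet : G.det = HR.det := by rw [hG, Matrix.det_mul, hMdet, one_mul]
  have hGentry : ∀ j k : Fin n, G j k
      = HR j k + (if j = 0 then 0 else -θ^(j:ℕ)) * HR 0 k := by
    intro j k
    rw [hG, Matrix.mul_apply]
    simp only [hM, Matrix.of_apply, add_mul, ite_mul, one_mul, zero_mul]
    rw [Finset.sum_add_distrib, Finset.sum_ite_eq', Finset.sum_ite_eq']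
    simp
  have hPe : ∀ m : ℕ, (P m : ℝ) = q * θ ^ m - e m := by
    intro m; simp [he]
  have hjd : ∀ j : Fin n, (j : ℕ) ≤ d := fun j => by omega
  -- entry bounds
  set r : Fin n → ℝ := fun j => if j = 0 then 6*q else 10*E with hr
  have hGbound : ∀ j k : Fin n, |G j k| ≤ r j := by
    intro j k
    have hk2 : (k:ℕ) ≤ 2*d := by have := hjd k; omega
    have hj2 : (j:ℕ) ≤ 2*d := by have := hjd j; omega
    have hjk2 : (j:ℕ) + (k:ℕ) ≤ 2*d := by have := hjd j; have := hjd k; omega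
    have hek := he2E _ hk2
    have hejk := he2E _ hjk2
    rcases eq_or_ne j 0 with rfl | hj
    · have hG0 : G 0 k = (P ((k:ℕ)) : ℝ) := by
        rw [hGentry]
        simp [hHR]
      have hr0 : r 0 = 6*(q:ℝ) := by simp [hr]
      rw [hG0, hr0, hPe]
      have h5 : |(q:ℝ) * θ ^ (k:ℕ)| ≤ 4*q := by
        rw [abs_of_nonneg (by positivity)]
        calc (q:ℝ) * θ^(k:ℕ) ≤ (q:ℝ) * 4 :=
              mul_le_mul_of_nonneg_left (hθpow4 _ hk2) (le_of_lt hqpos)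
          _ = 4*q := by ring
      calc |(q:ℝ)*θ^(k:ℕ) - e (k:ℕ)| ≤ |(q:ℝ)*θ^(k:ℕ)| + |e (k:ℕ)| := by
            simpa [sub_eq_add_neg, abs_neg] using abs_add_le ((q:ℝ)*θ^(k:ℕ)) (-(e (k:ℕ)))
        _ ≤ 4*q + 2*E := add_le_add h5 hek
        _ ≤ 6*q := by nlinarith
    · have hGj : G j k = θ^(j:ℕ) * e (k:ℕ) - e ((j:ℕ)+(k:ℕ)) := by
        rw [hGentry, if_neg hj]
        rw [hHR]
        simp only [Matrix.of_apply, Fin.val_zero, zero_add]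
        rw [hPe, hPe, pow_add]
        ring
      have hrj : r j = 10*E := by simp [hr, hj]
      rw [hGj, hrj]
      calc |θ^(j:ℕ)*e (k:ℕ) - e ((j:ℕ)+(k:ℕ))|
          ≤ |θ^(j:ℕ)*e (k:ℕ)| + |e ((j:ℕ)+(k:ℕ))| := by
            simpa [sub_eq_add_neg, abs_neg] using
              abs_add_le (θ^(j:ℕ)*e (k:ℕ)) (-(e ((j:ℕ)+(k:ℕ))))
        _ = θ^(j:ℕ)*|e (k:ℕ)| + |e ((j:ℕ)+(k:ℕ))| := by
            rw [abs_mul, abs_of_nonneg (by positivity : (0:ℝ) ≤ θ^(j:ℕ))]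
        _ ≤ 4*(2*E) + 2*E :=
            add_le_add (mul_le_mul (hθpow4 _ hj2) hek (abs_nonneg _) (by norm_num)) hejk
        _ ≤ 10*E := by linarith
  have hprod : ∏ j, r j = 6*(q:ℝ) * (10*E)^d := by
    rw [Fin.prod_univ_succ]
    have h0 : r 0 = 6*(q:ℝ) := by simp [hr]
    have hs : ∀ i : Fin d, r i.succ = 10*E := fun i => by simp [hr, Fin.succ_ne_zero]
    rw [h0, Finset.prod_congr rfl (fun i _ => hs i), Finset.prod_const, Finset.card_univ,
      Fintype.card_fin]
  have habs : (1:ℝ) ≤ |G.det| := by rw [hGdet, ← hHRdet]; exact h1le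
  have hle := det_abs_le_aux G r hGbound
  rw [hprod] at hle
  have hfinal : (n.factorial:ℝ) * (6*(q:ℝ)*(10*E)^d) < 1 := by
    calc (n.factorial:ℝ) * (6*(q:ℝ)*(10*E)^d)
        = (n.factorial:ℝ)*6*(q:ℝ)*10^d*E^d := by rw [mul_pow]; ring
      _ < (n.factorial:ℝ)*6*(q:ℝ)*10^d*(ε*(q:ℝ)⁻¹) := by
          apply mul_lt_mul_of_pos_left hEd (by positivity)
      _ = ((n.factorial:ℝ)*6*10^d*ε)*((q:ℝ)*(q:ℝ)⁻¹) := by ring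
      _ = ((n.factorial:ℝ)*6*10^d)*ε := by rw [mul_inv_cancel₀ (ne_of_gt hqpos), mul_one]
      _ = 1 := by
          rw [hε]
          field_simp
  linarith
end
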